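/- arXiv:1604.00712 — 5 statements merged into one kernel-verified Lean document; each statement's English description precedes it below -/
import Mathlib

section
/- Let V be a finite-dimensional vector space over 𝔽_p and α : V × V → 𝔽_p an alternating (antisymmetric) bilinear form. Suppose a finite p-group P acts linearly on V preserving α. Then there exists a maximal isotropic subspace U of V (i.e., U is isotropic and U equals its own orthogonal complement with respect to α) which is P-invariant. -/
open Module Submodule

universe u

lemma exists_fixed (p : ℕ) [Fact p.Prime] (V : Type*) [AddCommGroup V] [Module (ZMod p) V]
    [FiniteDimensional (ZMod p) V] (hV : ∃ v : V, v ≠ 0)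
    (P : Type*) [Group P] [Finite P] (hP : IsPGroup p P) (ρ : P →* (V ≃ₗ[ZMod p] V)) :
    ∃ v : V, v ≠ 0 ∧ ∀ g : P, ρ g v = v := by
  have hp := (Fact.out : p.Prime)
  have : Finite V := Module.finite_of_finite (ZMod p)
  have := Fintype.ofFinite V
  letI : MulAction P V := MulAction.compHom V ρ
  have hsmul : ∀ (g : P) (v : V), g • v = ρ g v := fun _ _ => rfl
  have hmod := hP.card_modEq_card_fixedPoints V
  have hcard : Fintype.card V = p ^ finrank (ZMod p) V := by
    have := card_eq_pow_finrank (K := ZMod p) (V := V)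
    simpa [ZMod.card] using this
  have hn : 0 < finrank (ZMod p) V := by
    obtain ⟨v, hv⟩ := hV
    exact finrank_pos_iff.mpr ⟨⟨v, 0, hv⟩⟩
  have hdvd : p ∣ Nat.card (MulAction.fixedPoints P V) := by
    have h1 : p ∣ Nat.card V := by
      rw [Nat.card_eq_fintype_card, hcard]
      exact dvd_pow_self p hn.ne'
    exact Nat.modEq_zero_iff_dvd.mp (hmod.symm.trans (Nat.modEq_zero_iff_dvd.mpr h1))
  have h0 : (0 : V) ∈ MulAction.fixedPoints P V := by
    intro g; simp [hsmul]
  have := Fintype.ofFinite (MulAction.fixedPoints P V)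
  have hge : 2 ≤ Nat.card (MulAction.fixedPoints P V) := by
    have hpos : 0 < Nat.card (MulAction.fixedPoints P V) := by
      rw [Nat.card_eq_fintype_card]
      exact Fintype.card_pos_iff.mpr ⟨⟨0, h0⟩⟩
    have h2 := hp.two_le
    have := Nat.le_of_dvd hpos hdvd
    omega
  obtain ⟨⟨v, hv⟩, hne⟩ : ∃ x : MulAction.fixedPoints P V, x ≠ ⟨0, h0⟩ :=
    Fintype.exists_ne_of_one_lt_card (by rw [← Nat.card_eq_fintype_card]; exact hge) (⟨0, h0⟩ : MulAction.fixedPoints P V)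
  exact ⟨v, by simpa [Subtype.ext_iff] using hne, fun g => hv g⟩

lemma mkRho {K : Type*} [Semiring K] {Q : Type*} [AddCommMonoid Q] [Module K Q]
    (P : Type*) [Group P] (eQ : P → (Q →ₗ[K] Q))
    (hcomp : ∀ g h : P, (eQ g).comp (eQ h) = eQ (g * h))
    (hone : eQ 1 = LinearMap.id) :
    ∃ ρ' : P →* (Q ≃ₗ[K] Q), ∀ g : P, (ρ' g).toLinearMap = eQ g := by
  have hinv : ∀ g : P, (eQ g).comp (eQ g⁻¹) = LinearMap.id := by
    intro g; rw [hcomp, mul_inv_cancel, hone]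
  have hinv' : ∀ g : P, (eQ g⁻¹).comp (eQ g) = LinearMap.id := by
    intro g; rw [hcomp, inv_mul_cancel, hone]
  refine ⟨{ toFun := fun g => LinearEquiv.ofLinear (eQ g) (eQ g⁻¹) (hinv g) (hinv' g)
            map_one' := ?_
            map_mul' := ?_ }, fun g => rfl⟩
  · apply LinearEquiv.toLinearMap_injective
    rw [LinearEquiv.ofLinear_toLinearMap]
    exact hone
  · intro g h
    apply LinearEquiv.toLinearMap_injective
    rw [LinearEquiv.coe_toLinearMap_mul, LinearEquiv.ofLinear_toLinearMap,
      LinearEquiv.ofLinear_toLinearMap, LinearEquiv.ofLinear_toLinearMap,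
      Module.End.mul_eq_comp, hcomp]

lemma aux (p : ℕ) [Fact p.Prime] (P : Type*) [Group P] [Finite P] (hP : IsPGroup p P) :
    ∀ (n : ℕ) (V : Type u) [AddCommGroup V] [Module (ZMod p) V] [FiniteDimensional (ZMod p) V],
      finrank (ZMod p) V ≤ n →
      ∀ (α : V →ₗ[ZMod p] V →ₗ[ZMod p] ZMod p), (∀ v, α v v = 0) →
      ∀ (ρ : P →* (V ≃ₗ[ZMod p] V)), (∀ (g : P) (v w : V), α (ρ g v) (ρ g w) = α v w) →
      ∃ U : Submodule (ZMod p) V,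
        (∀ u ∈ U, ∀ w ∈ U, α u w = 0) ∧
        (∀ v : V, (∀ u ∈ U, α v u = 0) → v ∈ U) ∧
        (∀ (g : P), ∀ u ∈ U, ρ g u ∈ U) := by
  intro n
  induction n with
  | zero =>
    intro V _ _ _ hrank α halt ρ hpres
    have : Subsingleton V := by
      rw [← finrank_zero_iff (R := ZMod p)]; omega
    refine ⟨⊤, fun u _ w _ => ?_, fun v _ => trivial, fun g u _ => trivial⟩
    have : u = 0 := Subsingleton.elim _ _
    simp [this]
  | succ n ih =>
    intro V _ _ _ hrank α halt ρ hpres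
    by_cases htriv : ∀ v : V, v = 0
    · refine ⟨⊤, fun u _ w _ => ?_, fun v _ => trivial, fun g u _ => trivial⟩
      rw [htriv u]; simp
    · push_neg at htriv
      obtain ⟨v, hv0, hvfix⟩ := exists_fixed p V htriv P hP ρ
      have hanti : ∀ x y : V, α x y = - α y x := by
        intro x y
        have h := halt (x + y)
        simp only [map_add, LinearMap.add_apply, halt] at h
        have : α x y + α y x = 0 := by linear_combination h
        linear_combination this
      set K := ZMod p
      set W : Submodule K V := LinearMap.ker (α v) with hW
      have hvW : v ∈ W := by simp [hW, halt]
      set vb : W := ⟨v, hvW⟩ with hvb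
      set Λ : Submodule K W := Submodule.span K {vb} with hΛ
      have hvbne : vb ≠ 0 := fun h => hv0 (by simpa [hvb, Subtype.ext_iff] using h)
      have hαvw : ∀ w : W, α v (w : V) = 0 := fun w => w.2
      have hαwv : ∀ w : W, α (w : V) v = 0 := by
        intro w; rw [hanti, hαvw, neg_zero]
      -- the induced form on the quotient
      obtain ⟨βQ, hβQapp⟩ : ∃ βQ : (W ⧸ Λ) →ₗ[K] (W ⧸ Λ) →ₗ[K] K,
          ∀ x y : W, βQ (Λ.mkQ x) (Λ.mkQ y) = α x y := by
        set β : W →ₗ[K] W →ₗ[K] K := α.compl₁₂ W.subtype W.subtype with hβ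
        have hβapp : ∀ x y : W, β x y = α x y := fun x y => rfl
        have hker1 : ∀ w : W, Λ ≤ LinearMap.ker (β w) := by
          intro w x hx
          obtain ⟨c, rfl⟩ := Submodule.mem_span_singleton.mp hx
          simp [hβapp, hαwv w]
          exact Or.inr (hαwv w)
        set g1 : W →ₗ[K] ((W ⧸ Λ) →ₗ[K] K) :=
          { toFun := fun w => Λ.liftQ (β w) (hker1 w)
            map_add' := by
              intro w w'
              refine LinearMap.ext fun x => ?_
              obtain ⟨y, rfl⟩ := Λ.mkQ_surjective x
              simp
            map_smul' := by
              intro c w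
              refine LinearMap.ext fun x => ?_
              obtain ⟨y, rfl⟩ := Λ.mkQ_surjective x
              simp } with hg1
        have hg1app : ∀ x y : W, g1 x (Λ.mkQ y) = α x y := fun x y => rfl
        have hker2 : Λ ≤ LinearMap.ker g1 := by
          intro x hx
          obtain ⟨c, rfl⟩ := Submodule.mem_span_singleton.mp hx
          have : g1 vb = 0 := by
            refine LinearMap.ext fun x => ?_
            obtain ⟨y, rfl⟩ := Λ.mkQ_surjective x
            rw [LinearMap.zero_apply, hg1app]
            exact hαvw y
          simp [LinearMap.mem_ker, map_smul, this]
        exact ⟨Λ.liftQ g1 hker2, fun x y => rfl⟩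
      have haltQ : ∀ x : W ⧸ Λ, βQ x x = 0 := by
        intro x
        obtain ⟨y, rfl⟩ := Λ.mkQ_surjective x
        rw [hβQapp]; exact halt y
      -- the action on the quotient
      have hWmap : ∀ (g : P) (x : V), x ∈ W → ρ g x ∈ W := by
        intro g x hx
        have : α (ρ g v) (ρ g x) = α v x := hpres g v x
        rw [hvfix g] at this
        simpa [hW, LinearMap.mem_ker, this] using hx
      obtain ⟨e, heapp⟩ : ∃ e : P → (W →ₗ[K] W),
          ∀ (g : P) (x : W), ((e g x : W) : V) = ρ g (x : V) :=
        ⟨fun g => ((ρ g).toLinearMap).restrict (hWmap g), fun g x => rfl⟩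
      have hΛmap : ∀ g : P, Λ ≤ Λ.comap (e g) := by
        intro g x hx
        obtain ⟨c, rfl⟩ := Submodule.mem_span_singleton.mp hx
        have hevb : e g vb = vb := by
          refine Subtype.ext ?_
          rw [heapp]; exact hvfix g
        simp only [Submodule.mem_comap, map_smul, hevb]
        exact Submodule.smul_mem _ _ (Submodule.mem_span_singleton_self vb)
      obtain ⟨eQ, heQapp⟩ : ∃ eQ : P → ((W ⧸ Λ) →ₗ[K] (W ⧸ Λ)),
          ∀ (g : P) (x : W), eQ g (Λ.mkQ x) = Λ.mkQ (e g x) :=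
        ⟨fun g => Submodule.mapQ Λ Λ (e g) (hΛmap g),
          fun g x => by simp [Submodule.mapQ_apply]⟩
      have heQcomp : ∀ g h : P, (eQ g).comp (eQ h) = eQ (g * h) := by
        intro g h
        refine LinearMap.ext fun x => ?_
        obtain ⟨y, rfl⟩ := Λ.mkQ_surjective x
        rw [LinearMap.comp_apply, heQapp, heQapp, heQapp]
        congr 1
        refine Subtype.ext ?_
        rw [heapp, heapp, heapp, map_mul]
        rfl
      have heQone : eQ 1 = LinearMap.id := by
        refine LinearMap.ext fun x => ?_
        obtain ⟨y, rfl⟩ := Λ.mkQ_surjective x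
        rw [heQapp, LinearMap.id_apply]
        congr 1
        refine Subtype.ext ?_
        rw [heapp, map_one]
        rfl
      obtain ⟨ρ', hρ've⟩ := mkRho P eQ heQcomp heQone
      have hρ'app : ∀ (g : P) (x : W), ρ' g (Λ.mkQ x) = Λ.mkQ (e g x) := by
        intro g x
        have h1 : (ρ' g).toLinearMap (Λ.mkQ x) = eQ g (Λ.mkQ x) := by rw [hρ've]
        rw [LinearEquiv.coe_toLinearMap] at h1
        rw [h1, heQapp]
      have hpresQ : ∀ (g : P) (x y : W ⧸ Λ), βQ (ρ' g x) (ρ' g y) = βQ x y := by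
        intro g x y
        obtain ⟨x, rfl⟩ := Λ.mkQ_surjective x
        obtain ⟨y, rfl⟩ := Λ.mkQ_surjective y
        rw [hρ'app, hρ'app, hβQapp, hβQapp, heapp, heapp]
        exact hpres g x y
      -- dimension count
      have hrankQ : finrank K (W ⧸ Λ) ≤ n := by
        have h1 : finrank K (W ⧸ Λ) + finrank K Λ = finrank K W :=
          Submodule.finrank_quotient_add_finrank Λ
        have h2 : finrank K Λ = 1 := finrank_span_singleton hvbne
        have h3 : finrank K W ≤ finrank K V := Submodule.finrank_le W
        have h4 : finrank K V = finrank (ZMod p) V := rfl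
        omega
      obtain ⟨U', hU'1, hU'2, hU'3⟩ := ih (W ⧸ Λ) hrankQ βQ haltQ ρ' hpresQ
      set U : Submodule K V := (U'.comap Λ.mkQ).map W.subtype with hU
      have hmemU : ∀ x : V, x ∈ U ↔ ∃ h : x ∈ W, Λ.mkQ ⟨x, h⟩ ∈ U' := by
        intro x
        constructor
        · rintro ⟨⟨y, hy⟩, hy', rfl⟩
          exact ⟨hy, hy'⟩
        · rintro ⟨h, h'⟩
          exact ⟨⟨x, h⟩, h', rfl⟩
      have hvU : v ∈ U := by
        rw [hmemU]
        refine ⟨hvW, ?_⟩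
        have : Λ.mkQ vb = 0 := by
          rw [Submodule.mkQ_apply, Submodule.Quotient.mk_eq_zero]
          exact Submodule.mem_span_singleton_self vb
        rw [this]
        exact U'.zero_mem
      refine ⟨U, ?_, ?_, ?_⟩
      · intro u hu w hw
        obtain ⟨hu1, hu2⟩ := (hmemU u).mp hu
        obtain ⟨hw1, hw2⟩ := (hmemU w).mp hw
        have := hU'1 _ hu2 _ hw2
        rwa [hβQapp] at this
      · intro x hx
        have hxW : x ∈ W := by
          have h1 : α x v = 0 := hx v hvU
          have h2 : α v x = 0 := by rw [hanti, h1, neg_zero]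
          simpa [hW, LinearMap.mem_ker] using h2
        rw [hmemU]
        refine ⟨hxW, hU'2 _ ?_⟩
        intro u' hu'
        obtain ⟨y, rfl⟩ := Λ.mkQ_surjective u'
        rw [hβQapp]
        refine hx (y : V) ?_
        rw [hmemU]
        exact ⟨y.2, by simpa using hu'⟩
      · intro g x hx
        obtain ⟨h1, h2⟩ := (hmemU x).mp hx
        rw [hmemU]
        refine ⟨hWmap g x h1, ?_⟩
        have h3 := hU'3 g _ h2
        rw [hρ'app] at h3
        have h4 : (⟨ρ g x, hWmap g x h1⟩ : W) = e g ⟨x, h1⟩ :=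
          Subtype.ext (heapp g ⟨x, h1⟩).symm
        rw [h4]
        exact h3

/-- Let `V` be a finite-dimensional vector space over `𝔽_p` and `α` an
antisymmetric (alternating) bilinear form on `V`. Suppose a finite `p`-group `P` acts
linearly on `V` preserving `α`. Then there is a maximal isotropic subspace `U` of `V`
(isotropic and equal to its own orthogonal complement) which is `P`-invariant. -/
theorem stmt0 (p : ℕ) [Fact p.Prime] (V : Type*) [AddCommGroup V] [Module (ZMod p) V]
    [FiniteDimensional (ZMod p) V]
    (α : V →ₗ[ZMod p] V →ₗ[ZMod p] ZMod p) (halt : ∀ v : V, α v v = 0)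
    (P : Type*) [Group P] [Finite P] (hP : IsPGroup p P)
    (ρ : P →* (V ≃ₗ[ZMod p] V))
    (hpres : ∀ (g : P) (v w : V), α (ρ g v) (ρ g w) = α v w) :
    ∃ U : Submodule (ZMod p) V,
      (∀ u ∈ U, ∀ w ∈ U, α u w = 0) ∧
      (∀ v : V, (∀ u ∈ U, α v u = 0) → v ∈ U) ∧
      (∀ (g : P), ∀ u ∈ U, ρ g u ∈ U) := by
  exact aux p P hP (finrank (ZMod p) V) V le_rfl α halt ρ hpres
end

section
/- Let k ⊂ k₂ be finite fields with |k| = q and |k₂| = q², q even, with Frobenius x ↦ x^q generating Gal(k₂/k). Extend this to the involution on k₂[t] sending h(t) = ∑ c_i t^i to h̃(t) = ∑ (-1)^{deg(h)-i} c_i^q t^i. If f(t) ∈ k₂[t] is monic irreducible of degree d with f̃ = f, then d is odd and every root ξ of f in an algebraic closure lies in the subfield k_d of degree d over k (equivalently ξ^{q^d} = ξ), and Tr_{k_{2d}/k_d}(ξ) = 0. -/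
open Polynomial IntermediateField

def powFixed (K : Type*) [Field K] [CharP K 2] (m : ℕ) : Subfield K where
  carrier := {x | x ^ 2 ^ m = x}
  mul_mem' := by
    intro a b ha hb
    simp only [Set.mem_setOf_eq] at *
    rw [mul_pow, ha, hb]
  one_mem' := one_pow _
  add_mem' := by
    intro a b ha hb
    simp only [Set.mem_setOf_eq] at *
    haveI : Fact (Nat.Prime 2) := ⟨Nat.prime_two⟩
    rw [add_pow_char_pow, ha, hb]
  zero_mem' := zero_pow (by positivity)
  neg_mem' := by
    intro a ha
    simp only [Set.mem_setOf_eq] at *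
    rw [CharTwo.neg_eq]; exact ha
  inv_mem' := by
    intro a ha
    simp only [Set.mem_setOf_eq] at *
    rw [inv_pow, ha]

lemma card_le_natDegree_of_roots {L : Type*} [Field L] {P : L[X]} (hP : P ≠ 0)
    {A : Type*} [Fintype A] {g : A → L} (hg : Function.Injective g)
    (hr : ∀ a, P.eval (g a) = 0) : Fintype.card A ≤ P.natDegree := by
  classical
  have hsub : Finset.univ.image g ⊆ P.roots.toFinset := by
    intro x hx
    simp only [Finset.mem_image, Finset.mem_univ, true_and] at hx
    obtain ⟨a, rfl⟩ := hx
    rw [Multiset.mem_toFinset, mem_roots hP]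
    exact hr a
  calc Fintype.card A = (Finset.univ.image g).card :=
        (Finset.card_image_of_injective _ hg).symm
    _ ≤ P.roots.toFinset.card := Finset.card_le_card hsub
    _ ≤ Multiset.card P.roots := Multiset.toFinset_card_le _
    _ ≤ P.natDegree := P.card_roots'

lemma monic_eq_of_dvd_irr {K : Type*} [Field K] {f g : K[X]} (hf : Irreducible f)
    (hfm : f.Monic) (hgm : g.Monic) (hpos : 0 < g.natDegree) (hdvd : g ∣ f) : g = f := by
  obtain ⟨c, hc⟩ := hdvd
  rcases hf.isUnit_or_isUnit hc with h | h
  · exact absurd h (not_isUnit_of_natDegree_pos g hpos)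
  · obtain ⟨a, -, rfl⟩ := Polynomial.isUnit_iff.mp h
    have ha : a = 1 := by
      have h1 := hfm.leadingCoeff
      rw [hc, leadingCoeff_mul, hgm.leadingCoeff, one_mul, leadingCoeff_C] at h1
      exact h1
    rw [hc, ha, map_one, mul_one]

noncomputable def tildePoly {K : Type*} [Field K] (q : ℕ) (h : K[X]) : K[X] :=
  ∑ i ∈ Finset.range (h.natDegree + 1),
    C ((-1 : K) ^ (h.natDegree - i) * (h.coeff i) ^ q) * X ^ i



set_option maxHeartbeats 2000000 in
/-- `q` even, `k₂` the field with `q²` elements. If `f ∈ k₂[t]` is monic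
irreducible of degree `d` with `f̃ = f`, then `d` is odd, every root `ξ` of `f` in an
algebraic closure lies in the subfield of degree `d` over `𝔽_q` (i.e. `ξ^(q^d) = ξ`),
and `Tr_{k_{2d}/k_d}(ξ) = ξ + ξ^(q^d) = 0`. -/
theorem stmt2 (q : ℕ) (hq : Even q) (k₂ : Type*) [Field k₂] [Fintype k₂]
    (hcard : Fintype.card k₂ = q ^ 2)
    (f : k₂[X]) (hmonic : f.Monic) (hirr : Irreducible f) (d : ℕ) (hdeg : f.natDegree = d)
    (htilde : tildePoly q f = f)
    (ξ : AlgebraicClosure k₂) (hroot : Polynomial.aeval ξ f = 0) :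
    Odd d ∧ ξ ^ (q ^ d) = ξ ∧ ξ + ξ ^ (q ^ d) = 0 := by
  classical
  haveI : Fact (Nat.Prime 2) := ⟨Nat.prime_two⟩
  have hd1 : 0 < d := hdeg ▸ hirr.natDegree_pos
  have hcard1 : 1 < q ^ 2 := hcard ▸ Fintype.one_lt_card
  have hq1 : 1 < q := by
    by_contra h
    push_neg at h
    have : q ^ 2 ≤ 1 ^ 2 := Nat.pow_le_pow_left h 2
    simp at this; nlinarith
  -- characteristic 2
  have hp2 : ringChar k₂ = 2 := by
    obtain ⟨n, hp, hcard'⟩ := FiniteField.card k₂ (ringChar k₂)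
    have h2q : (2 : ℕ) ∣ q := hq.two_dvd
    have h2 : (2 : ℕ) ∣ ringChar k₂ ^ (n : ℕ) := by
      rw [← hcard', hcard]
      exact h2q.trans (dvd_pow_self q (by norm_num))
    have := Nat.prime_two.dvd_of_dvd_pow h2
    exact ((Nat.prime_dvd_prime_iff_eq Nat.prime_two hp).mp this).symm
  haveI hchar : CharP k₂ 2 := hp2 ▸ ringChar.charP k₂
  haveI hcharL : CharP (AlgebraicClosure k₂) 2 := inferInstance
  -- q = 2 ^ m
  have hqm' : ∃ m : ℕ, q = 2 ^ m := by
    obtain ⟨n, -, hcard'⟩ := FiniteField.card k₂ 2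
    have hqdvd : q ∣ 2 ^ (n : ℕ) := by
      rw [← hcard', hcard]
      exact dvd_pow_self q (by norm_num)
    obtain ⟨m, -, hm⟩ := (Nat.dvd_prime_pow Nat.prime_two).mp hqdvd
    exact ⟨m, hm⟩
  obtain ⟨m, hqm⟩ := hqm'
  -- coefficients of f are fixed by x ↦ x ^ q
  have hcoeff : ∀ i, f.coeff i ^ q = f.coeff i := by
    intro i
    rcases le_or_gt i f.natDegree with hi | hi
    · have h := congrArg (fun p : k₂[X] => p.coeff i) htilde
      have hneg : (-1 : k₂) = 1 := CharTwo.neg_eq 1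
      simp only [tildePoly, finset_sum_coeff, coeff_C_mul, coeff_X_pow, hneg, one_pow,
        one_mul, mul_ite, mul_one, mul_zero, Finset.sum_ite_eq, Finset.mem_range] at h
      rw [if_pos (by omega)] at h
      exact h
    · rw [coeff_eq_zero_of_natDegree_lt hi, zero_pow (by omega)]
  -- the subfield F of elements fixed by x ↦ x ^ q
  set F : Subfield k₂ := powFixed k₂ m with hF
  have hmemF : ∀ x : k₂, x ∈ F ↔ x ^ q = x := by
    intro x
    rw [hqm]
    exact Iff.rfl
  -- f comes from F[X]
  set f₀ : Polynomial F :=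
    ∑ i ∈ Finset.range (f.natDegree + 1),
      C (⟨f.coeff i, (hmemF _).mpr (hcoeff i)⟩ : F) * X ^ i with hf₀def
  have hf₀ : f₀.map (algebraMap F k₂) = f := by
    rw [hf₀def, Polynomial.map_sum]
    conv_rhs => rw [f.as_sum_range]
    refine Finset.sum_congr rfl fun i _ => ?_
    rw [Polynomial.map_mul, Polynomial.map_C, Polynomial.map_pow, Polynomial.map_X,
      C_mul_X_pow_eq_monomial]
    rfl
  have hmon₀ : f₀.Monic := Polynomial.monic_of_injective (algebraMap F k₂).injective
    (by rw [hf₀]; exact hmonic)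
  have hdeg₀ : f₀.natDegree = d := by
    rw [← hdeg, ← hf₀, Polynomial.natDegree_map]
  have hirr₀ : Irreducible f₀ := by
    constructor
    · intro hu
      have : IsUnit f := by
        rw [← hf₀]
        exact hu.map (Polynomial.mapRingHom (algebraMap F k₂))
      exact hirr.not_isUnit this
    · intro a b hab
      have hab' : f = a.map (algebraMap F k₂) * b.map (algebraMap F k₂) := by
        rw [← hf₀, hab, Polynomial.map_mul]
      rcases hirr.isUnit_or_isUnit hab' with h | h
      · left
        rw [Polynomial.isUnit_iff_degree_eq_zero] at h ⊢
        rwa [Polynomial.degree_map] at h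
      · right
        rw [Polynomial.isUnit_iff_degree_eq_zero] at h ⊢
        rwa [Polynomial.degree_map] at h
  haveI : Fintype F := Fintype.ofFinite F
  -- F has exactly q elements
  have hcardF : Fintype.card F = q := by
    set P : k₂[X] := X ^ q - X with hPdef
    have hPne : P ≠ 0 := FiniteField.X_pow_card_sub_X_ne_zero k₂ hq1
    have hPdeg : P.natDegree = q := FiniteField.X_pow_card_sub_X_natDegree_eq k₂ hq1
    have hQroots : roots (X ^ (q ^ 2) - X : k₂[X]) = Finset.univ.val := by
      have := FiniteField.roots_X_pow_card_sub_X k₂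
      rwa [hcard] at this
    have hQne : (X ^ (q ^ 2) - X : k₂[X]) ≠ 0 :=
      FiniteField.X_pow_card_sub_X_ne_zero k₂ hcard1
    have hQdeg : (X ^ (q ^ 2) - X : k₂[X]).natDegree = q ^ 2 :=
      FiniteField.X_pow_card_sub_X_natDegree_eq k₂ hcard1
    have hPQ : P ∣ X ^ (q ^ 2) - X := by
      have hPq : P ^ q = X ^ (q ^ 2) - X ^ q := by
        rw [hPdef, CharTwo.sub_eq_add, CharTwo.sub_eq_add, hqm, add_pow_char_pow,
          ← pow_mul, ← pow_two (2 ^ m : ℕ)]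
      have hkey : X ^ (q ^ 2) - X = P * (P ^ (q - 1) + 1) := by
        have h1 : P * (P ^ (q - 1) + 1) = P ^ q + P := by
          rw [mul_add, mul_one, ← pow_succ']
          congr 2
          omega
        rw [h1, hPq, CharTwo.sub_eq_add, CharTwo.sub_eq_add, hPdef, CharTwo.sub_eq_add]
        rw [show (X : k₂[X]) ^ q ^ 2 + X ^ q + (X ^ q + X)
            = X ^ q ^ 2 + (X ^ q + X ^ q) + X by ring, CharTwo.add_self_eq_zero, add_zero]
      exact ⟨_, hkey⟩
    have hQsplits : Splits (X ^ (q ^ 2) - X : k₂[X]) := by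
      rw [splits_iff_card_roots, hQroots, hQdeg]
      simpa using hcard
    have hPsplits := hQsplits.of_dvd hQne hPQ
    have hProots_card : Multiset.card P.roots = q := by
      rw [← hPdeg]
      exact (splits_iff_card_roots.mp hPsplits)
    have hPnodup : P.roots.Nodup := by
      have hle := Polynomial.roots.le_of_dvd hQne hPQ
      rw [hQroots] at hle
      exact Multiset.nodup_of_le hle Finset.univ.nodup
    have hcongr : Fintype.card F = P.roots.toFinset.card := by
      refine (Fintype.card_congr (Equiv.subtypeEquivRight ?_)).trans (Fintype.card_coe _)
      intro x
      rw [hmemF, Multiset.mem_toFinset, mem_roots hPne, IsRoot.def, hPdef, eval_sub,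
        eval_pow, eval_X, sub_eq_zero]
    rw [hcongr, Multiset.toFinset_card_of_nodup hPnodup, hProots_card]
  -- the field F[X]/(f₀) has q ^ d elements
  haveI : Fact (Irreducible f₀) := ⟨hirr₀⟩
  set K' := AdjoinRoot f₀ with hK'
  set pb := AdjoinRoot.powerBasis (K := F) hmon₀.ne_zero with hpb
  haveI : FiniteDimensional F K' := pb.finite
  haveI : Finite K' := Module.finite_of_finite F
  haveI : Fintype K' := Fintype.ofFinite K'
  have hcardK' : Fintype.card K' = q ^ d := by
    rw [Module.card_eq_pow_finrank (K := F), hcardF, pb.finrank, hpb,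
      AdjoinRoot.powerBasis_dim, hdeg₀]
  -- f₀ divides X ^ (q ^ d) - X
  have hminr : minpoly F (AdjoinRoot.root f₀) = f₀ := by
    rw [AdjoinRoot.minpoly_root hmon₀.ne_zero, hmon₀.leadingCoeff, inv_one, map_one,
      mul_one]
  have hrfix : (AdjoinRoot.root f₀) ^ q ^ d = AdjoinRoot.root f₀ := by
    have h := FiniteField.pow_card (AdjoinRoot.root f₀)
    rwa [hcardK'] at h
  have hdvd₀ : f₀ ∣ (X ^ q ^ d - X : Polynomial F) := by
    rw [← hminr]
    refine minpoly.dvd F _ ?_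
    rw [map_sub, map_pow, aeval_X, hrfix, sub_self]
  have hdvd : f ∣ (X ^ q ^ d - X : k₂[X]) := by
    have h := Polynomial.map_dvd (algebraMap F k₂) hdvd₀
    rwa [hf₀, Polynomial.map_sub, Polynomial.map_pow, Polynomial.map_X] at h
  -- hence ξ ^ (q ^ d) = ξ
  have hxi : ξ ^ (q ^ d) = ξ := by
    obtain ⟨g, hg⟩ := hdvd
    have h := congrArg (Polynomial.aeval ξ) hg
    rw [map_sub, map_pow, aeval_X, map_mul, hroot, zero_mul, sub_eq_zero] at h
    exact h
  refine ⟨?_, hxi, ?_⟩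
  · rw [← Nat.not_even_iff_odd]
    intro hdeven
    obtain ⟨c, hc⟩ := hdeven
    -- every element of k₂ is fixed by x ↦ x ^ (q ^ d)
    have hk2fix : ∀ x : k₂, x ^ q ^ d = x := by
      intro x
      have h := FiniteField.pow_card_pow c x
      rw [hcard] at h
      rw [show q ^ d = (q ^ 2) ^ c by rw [← pow_mul]; congr 1; omega]
      exact h
    -- the field k₂[X]/(f), of cardinality (q²)^d
    haveI : Fact (Irreducible f) := ⟨hirr⟩
    set K'' := AdjoinRoot f with hK''
    set pb2 := AdjoinRoot.powerBasis (K := k₂) hmonic.ne_zero with hpb2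
    haveI : FiniteDimensional k₂ K'' := pb2.finite
    haveI : Finite K'' := Module.finite_of_finite k₂
    haveI : Fintype K'' := Fintype.ofFinite K''
    have hcardK'' : Fintype.card K'' = (q ^ 2) ^ d := by
      rw [Module.card_eq_pow_finrank (K := k₂), hcard, pb2.finrank, hpb2,
        AdjoinRoot.powerBasis_dim, hdeg]
    haveI : CharP K'' 2 := charP_of_injective_algebraMap (algebraMap k₂ K'').injective 2
    have hq2N : q ^ d = 2 ^ (m * d) := by rw [hqm, ← pow_mul]
    -- the Frobenius x ↦ x^(q^d) as a ring hom on K''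
    let σ : K'' →+* K'' :=
      { toFun := fun x => x ^ 2 ^ (m * d)
        map_one' := one_pow _
        map_mul' := fun x y => mul_pow x y _
        map_zero' := zero_pow (by positivity)
        map_add' := fun x y => add_pow_char_pow x y 2 (m * d) }
    -- it is a k₂-algebra map since d is even
    let σa : K'' →ₐ[k₂] K'' :=
      { toRingHom := σ
        commutes' := fun x => by
          show (algebraMap k₂ K'' x) ^ 2 ^ (m * d) = algebraMap k₂ K'' x
          rw [← map_pow, ← hq2N, hk2fix] }
    -- the root of f is fixed
    have hrootfix : σa (AdjoinRoot.root f) = AdjoinRoot.root f := by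
      show (AdjoinRoot.root f) ^ 2 ^ (m * d) = AdjoinRoot.root f
      rw [← hq2N]
      have h0 : Polynomial.aeval (AdjoinRoot.root f) (X ^ q ^ d - X : k₂[X]) = 0 := by
        rw [AdjoinRoot.aeval_eq, AdjoinRoot.mk_eq_zero]
        exact hdvd
      rw [map_sub, map_pow, aeval_X, sub_eq_zero] at h0
      exact h0
    -- hence every element of K'' is fixed
    have hall : ∀ y : K'', y ^ q ^ d = y := by
      have hid : σa = AlgHom.id k₂ K'' := AdjoinRoot.algHom_ext (hrootfix.trans rfl)
      intro y
      have h := congrArg (fun φ : K'' →ₐ[k₂] K'' => φ y) hid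
      simp only [AlgHom.id_apply] at h
      rw [hq2N]
      exact h
    -- contradiction by counting roots of X^(q^d) - X
    have hfix_ne : (X ^ q ^ d - X : K''[X]) ≠ 0 :=
      FiniteField.X_pow_card_sub_X_ne_zero _ (Nat.one_lt_pow (by omega) hq1)
    have hfix_deg : (X ^ q ^ d - X : K''[X]).natDegree = q ^ d :=
      FiniteField.X_pow_card_sub_X_natDegree_eq _ (Nat.one_lt_pow (by omega) hq1)
    have hle : Fintype.card K'' ≤ q ^ d := by
      have h := card_le_natDegree_of_roots (P := (X ^ q ^ d - X : K''[X])) hfix_ne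
        (g := fun y : K'' => y) Function.injective_id
        (fun y => by rw [eval_sub, eval_pow, eval_X, hall, sub_self])
      rwa [hfix_deg] at h
    rw [hcardK''] at hle
    have hlt : q ^ d < (q ^ 2) ^ d := by
      refine Nat.pow_lt_pow_left ?_ (by omega)
      nlinarith
    omega
  · rw [hxi]
    exact CharTwo.add_self_eq_zero ξ
end

section
/- Let k₂/k be a quadratic extension of finite fields, |k| = q, and let ~ be the involution on monic polynomials in k₂[t] given by h̃(t) = ∑ (-1)^{deg h - i} c_i^q t^i for h = ∑ c_i t^i. If n is odd, the number of monic irreducible polynomials f ∈ k₂[t] of degree n with f̃ = f equals w_n(q) = (1/n) ∑_{m|n} μ(n/m) q^m. -/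
open Polynomial

section TildeBasic

variable {K : Type*} [Field K] (q : ℕ)

lemma tildePoly_coeff (h : K[X]) (j : ℕ) :
    (tildePoly q h).coeff j =
      if j ≤ h.natDegree then (-1 : K) ^ (h.natDegree - j) * (h.coeff j) ^ q else 0 := by
  unfold tildePoly
  rw [finset_sum_coeff]
  simp only [coeff_C_mul, coeff_X_pow, mul_ite, mul_one, mul_zero]
  rw [Finset.sum_ite_eq]
  simp [Finset.mem_range, Nat.lt_succ_iff]

end TildeBasic

section Tilde2

variable {K : Type*} [Field K] {q : ℕ}

lemma tildePoly_natDegree (hq : 1 ≤ q) {h : K[X]} (hm : h.Monic) :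
    (tildePoly q h).natDegree = h.natDegree := by
  have hc : (tildePoly q h).coeff h.natDegree = 1 := by
    rw [tildePoly_coeff]
    simp [hm.coeff_natDegree]
  apply le_antisymm
  · rw [natDegree_le_iff_coeff_eq_zero]
    intro m hm'
    rw [tildePoly_coeff, if_neg (by omega)]
  · exact le_natDegree_of_ne_zero (by rw [hc]; exact one_ne_zero)

lemma tildePoly_monic (hq : 1 ≤ q) {h : K[X]} (hm : h.Monic) :
    (tildePoly q h).Monic := by
  have := tildePoly_natDegree hq hm
  unfold Monic leadingCoeff
  rw [this, tildePoly_coeff]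
  simp [hm.coeff_natDegree]

lemma tildePoly_aeval (q p a : ℕ) [Fact p.Prime] (hqp : q = p ^ a)
    {L : Type*} [Field L] [Algebra K L] [CharP L p] (h : K[X]) (y : L) :
    (aeval (-(y ^ q))) (tildePoly q h) = (-1) ^ h.natDegree * ((aeval y) h) ^ q := by
  have hfr : ∀ z : L, z ^ q = (iterateFrobenius L p a) z := fun z => by
    rw [iterateFrobenius_def, hqp]
  rw [hfr ((aeval y) h), aeval_eq_sum_range (p := h) (x := y), map_sum]
  unfold tildePoly
  rw [map_sum, Finset.mul_sum]
  apply Finset.sum_congr rfl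
  intro i hi
  have hi' : i ≤ h.natDegree := Nat.lt_succ_iff.mp (Finset.mem_range.mp hi)
  rw [map_mul, aeval_C, map_pow, aeval_X, Algebra.smul_def, map_mul, map_pow,
    ← hfr]
  have h1 : ((algebraMap K L) (-1 : K)) = -1 := by simp
  rw [h1, mul_pow, ← map_pow, neg_pow (y ^ q) i, pow_right_comm]
  rw [show ((-1 : L) ^ (h.natDegree - i)) * (algebraMap K L) (h.coeff i ^ q) *
      ((-1 : L) ^ i * (y ^ i) ^ q) = ((-1 : L) ^ (h.natDegree - i) * (-1 : L) ^ i) *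
      ((algebraMap K L) (h.coeff i ^ q) * (y ^ i) ^ q) by ring,
    ← pow_add, Nat.sub_add_cancel hi']

end Tilde2

section CharStuff

lemma aux_charP (q p a : ℕ) [Fact p.Prime] (hqp : q = p ^ a) (ha : 1 ≤ a)
    (k₂ : Type*) [Field k₂] [Fintype k₂] (hcard : Fintype.card k₂ = q ^ 2) :
    CharP k₂ p := by
  haveI := ringChar.charP k₂
  obtain ⟨n, hp', hcardeq⟩ := FiniteField.card k₂ (ringChar k₂)
  have hdvd : p ∣ ringChar k₂ ^ (n : ℕ) := by
    rw [← hcardeq, hcard, hqp, ← pow_mul]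
    exact dvd_pow_self p (by positivity)
  have hpp : p = ringChar k₂ :=
    (Nat.prime_dvd_prime_iff_eq Fact.out hp').mp ((Fact.out : p.Prime).dvd_of_dvd_pow hdvd)
  rw [hpp]; exact ringChar.charP k₂

lemma aux_neg_one_pow (q p a : ℕ) [Fact p.Prime] (hqp : q = p ^ a)
    {L : Type*} [Field L] [CharP L p] : (-1 : L) ^ q = -1 := by
  have : (iterateFrobenius L p a) (-1 : L) = -1 := by
    rw [map_neg, map_one]
  rw [hqp, ← iterateFrobenius_def, this]

lemma tau_iter (q p a : ℕ) [Fact p.Prime] (hqp : q = p ^ a)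
    {L : Type*} [Field L] [CharP L p] (m : ℕ) (y : L) :
    (fun z : L => -(z ^ q))^[m] y = (-1) ^ m * y ^ (q ^ m) := by
  induction m with
  | zero => simp
  | succ m ih =>
    rw [Function.iterate_succ_apply', ih]
    show -((((-1 : L) ^ m * y ^ q ^ m)) ^ q) = _
    rw [mul_pow, ← pow_mul, ← pow_mul, mul_comm (m) q, pow_mul, aux_neg_one_pow q p a hqp,
      ← pow_succ, pow_succ]
    ring

lemma aeval_pow_card_sq (q p a : ℕ) [Fact p.Prime] (hqp : q = p ^ a)
    {k₂ : Type*} [Field k₂] [Fintype k₂] (hcard : Fintype.card k₂ = q ^ 2)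
    {L : Type*} [Field L] [Algebra k₂ L] [CharP L p] (h : k₂[X]) (y : L) :
    (aeval (y ^ q ^ 2)) h = ((aeval y) h) ^ q ^ 2 := by
  have hfr : ∀ z : L, z ^ q ^ 2 = (iterateFrobenius L p (2 * a)) z := fun z => by
    rw [iterateFrobenius_def, hqp, ← pow_mul, mul_comm a 2, pow_mul]
  rw [hfr ((aeval y) h), aeval_eq_sum_range (p := h) (x := y),
    aeval_eq_sum_range (p := h) (x := y ^ q ^ 2), map_sum]
  apply Finset.sum_congr rfl
  intro i hi
  rw [Algebra.smul_def, Algebra.smul_def, map_mul, map_pow, ← hfr, ← hfr, ← map_pow]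
  congr 2
  rw [← hcard, FiniteField.pow_card]

end CharStuff

section ASet

lemma exists_finset_A (q p a : ℕ) [Fact p.Prime] (hqp : q = p ^ a) (ha : 1 ≤ a)
    {Ω : Type*} [Field Ω] [CharP Ω p] [IsAlgClosed Ω] (m : ℕ) (hm : Odd m) (hm1 : 1 ≤ m) :
    ∃ s : Finset Ω, (∀ y : Ω, y ∈ s ↔ (fun z : Ω => -(z ^ q))^[m] y = y) ∧ s.card = q ^ m := by
  classical
  have hq2 : 2 ≤ q := by
    have h1 : p ≤ p ^ a := Nat.le_self_pow (by omega) p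
    have h2 := (Fact.out : p.Prime).two_le
    omega
  set N := q ^ m with hNdef
  have hN : 2 ≤ N := le_trans hq2 (Nat.le_self_pow (by omega) q)
  set P : Polynomial Ω := X ^ N + X with hPdef
  have hdegX : (X : Polynomial Ω).degree < ((X : Polynomial Ω) ^ N).degree := by
    rw [degree_X_pow, degree_X]
    exact_mod_cast by omega
  have hPdeg : P.natDegree = N := by
    have h2 := degree_add_eq_left_of_degree_lt hdegX
    rw [degree_X_pow] at h2
    exact natDegree_eq_of_degree_eq_some h2
  have hP0 : P ≠ 0 := ne_zero_of_natDegree_gt (n := 0) (by omega)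
  have hNzero : ((N : ℕ) : Ω) = 0 := by
    rw [hNdef, hqp, ← pow_mul]
    push_cast
    rw [CharP.cast_eq_zero Ω p]
    exact zero_pow (by positivity)
  have hder : derivative P = 1 := by
    rw [hPdef]
    rw [derivative_add, derivative_X_pow, derivative_X, hNzero]
    simp
  have hsep : P.Separable := by
    rw [separable_def, hder]
    exact isCoprime_one_right
  have hsplits : Splits P := IsAlgClosed.splits P
  have hcard : P.roots.card = N := by
    rw [splits_iff_card_roots.mp hsplits, hPdeg]
  refine ⟨P.roots.toFinset, ?_, ?_⟩
  · intro y
    rw [Multiset.mem_toFinset, mem_roots hP0]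
    have hir : P.IsRoot y ↔ y ^ N + y = 0 := by
      constructor <;> intro h2
      · simpa [hPdef] using h2
      · simp only [IsRoot, hPdef, eval_add, eval_pow, eval_X]; exact h2
    rw [hir, tau_iter q p a hqp, Odd.neg_one_pow hm]
    constructor <;> intro h2 <;> linear_combination -h2
  · rw [Multiset.toFinset_card_of_nodup (nodup_roots hsep), hcard]

end ASet

section KeyPeriod

open IntermediateField

lemma key_period (q p a : ℕ) [Fact p.Prime] (hqp : q = p ^ a) (ha : 1 ≤ a)
    (k₂ : Type*) [Field k₂] [Fintype k₂] (hcard : Fintype.card k₂ = q ^ 2)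
    {Ω : Type*} [Field Ω] [Algebra k₂ Ω] [CharP Ω p]
    {x : Ω} (hint : IsIntegral k₂ x) :
    Function.minimalPeriod (fun z : Ω => z ^ q ^ 2) x = (minpoly k₂ x).natDegree := by
  classical
  have hq2 : 2 ≤ q := by
    have h1 : p ≤ p ^ a := Nat.le_self_pow (by omega) p
    have h2 := (Fact.out : p.Prime).two_le
    omega
  set f := (fun z : Ω => z ^ q ^ 2) with hf
  have hiter : ∀ (j : ℕ) (z : Ω), f^[j] z = z ^ ((q ^ 2) ^ j) := fun j z => by
    rw [hf, pow_iterate]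
  set d := (minpoly k₂ x).natDegree with hd
  have hd0 : 0 < d := minpoly.natDegree_pos hint
  haveI : FiniteDimensional k₂ k₂⟮x⟯ := IntermediateField.adjoin.finiteDimensional hint
  have hrank : Module.finrank k₂ k₂⟮x⟯ = d := IntermediateField.adjoin.finrank hint
  haveI : Finite k₂⟮x⟯ := Module.finite_of_finite k₂
  haveI : Fintype k₂⟮x⟯ := Fintype.ofFinite _
  have hcardK : Fintype.card k₂⟮x⟯ = (q ^ 2) ^ d := by
    rw [Module.card_eq_pow_finrank (K := k₂) (V := k₂⟮x⟯), hcard, hrank]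
  set ξ : k₂⟮x⟯ := AdjoinSimple.gen k₂ x with hξ
  have hper : Function.IsPeriodicPt f d x := by
    show f^[d] x = x
    rw [hiter]
    have h1 : ξ ^ ((q ^ 2) ^ d) = ξ := by rw [← hcardK]; exact FiniteField.pow_card ξ
    have h2 := congrArg (fun z : k₂⟮x⟯ => (z : Ω)) h1
    simpa [hξ, AdjoinSimple.coe_gen] using h2
  set e := Function.minimalPeriod f x with he
  have hed : e ∣ d := hper.minimalPeriod_dvd
  have he0 : 0 < e := Function.IsPeriodicPt.minimalPeriod_pos hd0 hper
  set Q := (q ^ 2) ^ e with hQ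
  have hQ2 : 2 ≤ Q := by
    have : q ≤ q ^ 2 := Nat.le_self_pow (by omega) q
    have : q ^ 2 ≤ (q ^ 2) ^ e := Nat.le_self_pow (by omega) _
    omega
  have hxQ : x ^ Q = x := by
    have h1 := Function.isPeriodicPt_minimalPeriod f x
    rw [← he] at h1
    have h2 : f^[e] x = x := h1
    rwa [hiter] at h2
  have hQp : Q = p ^ (2 * a * e) := by
    rw [hQ, hqp, ← pow_mul, ← pow_mul]
    ring_nf
  have hall : ∀ y : Ω, y ∈ k₂⟮x⟯ → y ^ Q = y := by
    intro y hy
    refine IntermediateField.adjoin_induction k₂ (p := fun y _ => y ^ Q = y) (fun z hz => ?_)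
      (fun c => ?_) (fun u v _ _ hu hv => ?_) (fun u _ hu => ?_) (fun u v _ _ hu hv => ?_) hy
    · show z ^ Q = z
      rw [Set.mem_singleton_iff.mp hz]; exact hxQ
    · show (algebraMap k₂ Ω) c ^ Q = (algebraMap k₂ Ω) c
      rw [← map_pow]
      congr 1
      rw [hQ, ← hcard]
      exact FiniteField.pow_card_pow e c
    · show (u + v) ^ Q = u + v
      replace hu : u ^ Q = u := hu
      replace hv : v ^ Q = v := hv
      rw [hQp, add_pow_char_pow, ← hQp, hu, hv]
    · show u⁻¹ ^ Q = u⁻¹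
      replace hu : u ^ Q = u := hu
      rw [inv_pow, hu]
    · show (u * v) ^ Q = u * v
      replace hu : u ^ Q = u := hu
      replace hv : v ^ Q = v := hv
      rw [mul_pow, hu, hv]
  have hcard_le : Fintype.card k₂⟮x⟯ ≤ Q := by
    set G : Polynomial k₂⟮x⟯ := X ^ Q - X with hG
    have hdeg : (X : Polynomial k₂⟮x⟯).degree < ((X : Polynomial k₂⟮x⟯) ^ Q).degree := by
      rw [degree_X_pow, degree_X]
      exact_mod_cast by omega
    have hGdeg : G.natDegree = Q := by
      have h2 := degree_sub_eq_left_of_degree_lt hdeg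
      rw [degree_X_pow] at h2
      exact natDegree_eq_of_degree_eq_some h2
    have hG0 : G ≠ 0 := ne_zero_of_natDegree_gt (n := 0) (by omega)
    have hsub : (Finset.univ : Finset k₂⟮x⟯) ⊆ G.roots.toFinset := by
      intro y _
      rw [Multiset.mem_toFinset, mem_roots hG0]
      have hyQ : y ^ Q = y := by
        have := hall (y : Ω) y.2
        exact_mod_cast Subtype.coe_injective (by push_cast; exact this)
      show eval y G = 0
      rw [hG]
      simp [hyQ]
    calc Fintype.card k₂⟮x⟯ = Finset.univ.card := (Finset.card_univ).symm
      _ ≤ G.roots.toFinset.card := Finset.card_le_card hsub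
      _ ≤ Multiset.card G.roots := Multiset.toFinset_card_le _
      _ ≤ G.natDegree := card_roots' G
      _ = Q := hGdeg
  have hde : d ≤ e := by
    rw [hcardK, hQ] at hcard_le
    exact (Nat.pow_le_pow_iff_right (by nlinarith)).mp hcard_le
  exact le_antisymm (Nat.le_of_dvd hd0 hed) hde

end KeyPeriod

section Helpers

lemma integral_of_pow_eq (k₂ : Type*) [Field k₂] {Ω : Type*} [Field Ω] [Algebra k₂ Ω]
    {x : Ω} (N : ℕ) (hN : 2 ≤ N) (hx : x ^ N = x) : IsIntegral k₂ x := by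
  refine ⟨X ^ N - X, ?_, ?_⟩
  · apply (monic_X_pow N).sub_of_left
    rw [degree_X_pow, degree_X]
    exact_mod_cast by omega
  · simp [hx]

lemma monic_dvd_eq {k₂ : Type*} [Field k₂] (f g : Polynomial k₂) (hf : f.Monic) (hg : g.Monic)
    (hdvd : f ∣ g) (hdeg : f.natDegree = g.natDegree) : f = g := by
  obtain ⟨c, hc⟩ := hdvd
  have hf0 : f ≠ 0 := hf.ne_zero
  have hc0 : c ≠ 0 := by
    rintro rfl
    rw [mul_zero] at hc
    exact hg.ne_zero hc
  have hdc : c.natDegree = 0 := by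
    have := natDegree_mul hf0 hc0
    rw [← hc, ← hdeg] at this
    omega
  have hcC : c = C (c.coeff 0) := eq_C_of_natDegree_eq_zero hdc
  have hlc : c.coeff 0 = 1 := by
    have h1 : g.leadingCoeff = f.leadingCoeff * c.leadingCoeff := by rw [hc, leadingCoeff_mul]
    rw [hf.leadingCoeff, hg.leadingCoeff, one_mul] at h1
    rw [leadingCoeff, hdc] at h1
    exact h1.symm
  rw [hc, hcC, hlc, map_one, mul_one]

end Helpers

/-- `k₂ = 𝔽_{q²}`. For `n` odd, the number of monic irreducible
polynomials `f ∈ k₂[t]` of degree `n` with `f̃ = f` equals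
`w_n(q) = (1/n) ∑_{m ∣ n} μ(n/m) q^m`. -/
theorem stmt4 (q : ℕ) (p : ℕ) [Fact p.Prime] (a : ℕ) (hqp : q = p ^ a) (ha : 1 ≤ a)
    (k₂ : Type*) [Field k₂] [Fintype k₂] (hcard : Fintype.card k₂ = q ^ 2)
    (n : ℕ) (hn : Odd n) (hn1 : 1 ≤ n) :
    (n : ℤ) * ({f : k₂[X] | f.Monic ∧ Irreducible f ∧ f.natDegree = n ∧
        tildePoly q f = f}.ncard : ℤ) =
      ∑ m ∈ n.divisors, (ArithmeticFunction.moebius (n / m)) * (q : ℤ) ^ m := by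
  classical
  haveI hchar : CharP k₂ p := aux_charP q p a hqp ha k₂ hcard
  set Ω := AlgebraicClosure k₂ with hΩ
  haveI : CharP Ω p := charP_of_injective_algebraMap (algebraMap k₂ Ω).injective p
  have hq2 : 2 ≤ q := by
    have h1 : p ≤ p ^ a := Nat.le_self_pow (by omega) p
    have h2 := (Fact.out : p.Prime).two_le
    omega
  set τ := (fun z : Ω => -(z ^ q)) with hτ
  set σ₂ := (fun z : Ω => z ^ q ^ 2) with hσ₂
  -- injectivity of τ
  have htau_inj : Function.Injective τ := by
    intro u v huv
    have h1 : (iterateFrobenius Ω p a) u = (iterateFrobenius Ω p a) v := by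
      rw [iterateFrobenius_def, iterateFrobenius_def, ← hqp]
      exact neg_injective huv
    exact (iterateFrobenius Ω p a).injective h1
  -- iterates
  have hσiter : ∀ (j : ℕ) (z : Ω), σ₂^[j] z = z ^ ((q ^ 2) ^ j) := fun j z => by
    rw [hσ₂, pow_iterate]
  have htau2 : ∀ (j : ℕ) (y : Ω), τ^[2 * j] y = σ₂^[j] y := fun j y => by
    rw [tau_iter q p a hqp, hσiter, pow_mul (-1 : Ω) 2 j, neg_one_sq, one_pow, one_mul,
      ← pow_mul q 2 j]
  -- the A-finsets
  have hA := fun m (hm : Odd m) (hm1 : 1 ≤ m) =>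
    exists_finset_A q p a hqp ha (Ω := Ω) m hm hm1
  choose! sA hsmem hscard using hA
  set Bfin : ℕ → Finset Ω :=
    fun d => (sA n).filter (fun y => Function.minimalPeriod τ y = d) with hBfin
  have hmemBn : ∀ y : Ω, y ∈ Bfin n ↔ (τ^[n] y = y ∧ Function.minimalPeriod τ y = n) := by
    intro y
    rw [hBfin]
    simp only [Finset.mem_filter]
    rw [hsmem n hn hn1]
  -- S1 : partition
  have hS1 : ∀ m, 0 < m → m ∣ n → (sA m).card = ∑ d ∈ m.divisors, (Bfin d).card := by
    intro m hm0 hmn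
    have hmOdd : Odd m := by
      rcases Nat.even_or_odd m with he | ho
      · exfalso
        obtain ⟨c, hc⟩ := hmn
        exact (Nat.not_even_iff_odd.mpr hn) (hc ▸ he.mul_right c)
      · exact ho
    have hset : sA m = m.divisors.biUnion Bfin := by
      apply Finset.ext
      intro y
      simp only [Finset.mem_biUnion, Nat.mem_divisors, hBfin, Finset.mem_filter]
      rw [hsmem m hmOdd hm0]
      constructor
      · intro hy
        have hyper : Function.IsPeriodicPt τ m y := hy
        refine ⟨Function.minimalPeriod τ y, ⟨hyper.minimalPeriod_dvd, by omega⟩, ?_, rfl⟩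
        rw [hsmem n hn hn1]
        exact hyper.trans_dvd hmn
      · rintro ⟨d, ⟨hdm, -⟩, -, hyd⟩
        have h1 : Function.IsPeriodicPt τ d y := by
          rw [← hyd]; exact Function.isPeriodicPt_minimalPeriod τ y
        exact h1.trans_dvd hdm
    rw [hset, Finset.card_biUnion]
    intro d1 h1 d2 h2 hne
    show Disjoint (Bfin d1) (Bfin d2)
    rw [Finset.disjoint_left]
    intro y hy1 hy2
    rw [hBfin] at hy1 hy2
    simp only [Finset.mem_filter] at hy1 hy2
    exact hne (hy1.2.symm ▸ hy2.2.symm ▸ rfl)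
  -- S2 : Möbius inversion
  have hmob := (ArithmeticFunction.sum_eq_iff_sum_mul_moebius_eq_on {m : ℕ | m ∣ n}
    (fun a b hab hb => hab.trans hb)
    (f := fun d => ((Bfin d).card : ℤ)) (g := fun m => (q : ℤ) ^ m)).mp ?_ n (by omega)
    (dvd_refl n)
  swap
  · intro m hm0 hmn
    rw [← Nat.cast_sum, ← hS1 m hm0 hmn, hscard m (by
      rcases Nat.even_or_odd m with he | ho
      · exfalso
        obtain ⟨c, hc⟩ := hmn
        exact (Nat.not_even_iff_odd.mpr hn) (hc ▸ he.mul_right c)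
      · exact ho) (by omega)]
    push_cast
    ring
  push_cast at hmob
  rw [← Nat.sum_divisorsAntidiagonal' (f := fun i j => (ArithmeticFunction.moebius i) *
      (q : ℤ) ^ j), hmob]
  -- Now goal : (n : ℤ) * ncard = (Bfin n).card
  have hodd2 : n % 2 = 1 := Nat.odd_iff.mp hn
  have hrootiter : ∀ (f : k₂[X]) (x : Ω), aeval x f = 0 → ∀ j, aeval (σ₂^[j] x) f = 0 := by
    intro f x hx j
    induction j with
    | zero => simpa using hx
    | succ j ih =>
      rw [Function.iterate_succ_apply']
      show aeval ((σ₂^[j] x) ^ q ^ 2) f = 0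
      rw [aeval_pow_card_sq q p a hqp hcard, ih, zero_pow (by positivity)]
  have hperkey : ∀ x : Ω, Function.minimalPeriod τ x = n →
      IsIntegral k₂ x ∧ (minpoly k₂ x).natDegree = n := by
    intro x hx
    have hxpn : τ^[n] x = x := by
      rw [← hx]; exact Function.isPeriodicPt_minimalPeriod τ x
    have hσn : σ₂^[n] x = x := by
      rw [← htau2, two_mul, Function.iterate_add_apply, hxpn, hxpn]
    have hint : IsIntegral k₂ x := by
      refine integral_of_pow_eq k₂ ((q ^ 2) ^ n) ?_ ?_
      · calc (2 : ℕ) ≤ q := hq2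
          _ ≤ q ^ 2 := Nat.le_self_pow (by omega) q
          _ ≤ (q ^ 2) ^ n := Nat.le_self_pow (by omega) _
      · rw [← hσiter]; exact hσn
    refine ⟨hint, ?_⟩
    have hkey := key_period q p a hqp ha k₂ hcard hint
    set e := Function.minimalPeriod σ₂ x with he
    have hen : e ∣ n := (show Function.IsPeriodicPt σ₂ n x from hσn).minimalPeriod_dvd
    have hne : n ∣ e := by
      have h1 : σ₂^[e] x = x := Function.isPeriodicPt_minimalPeriod σ₂ x
      have h2 : τ^[2 * e] x = x := by rw [htau2]; exact h1
      have h3 : n ∣ 2 * e := by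
        rw [← hx]
        exact Function.IsPeriodicPt.minimalPeriod_dvd h2
      rw [mul_comm] at h3
      exact (Nat.Coprime.dvd_of_dvd_mul_right (hn.coprime_two_right) h3)
    rw [← hkey]
    exact (Nat.dvd_antisymm hen hne)
  have hcardroots : ∀ f : k₂[X], Irreducible f → f.natDegree = n →
      ((f.map (algebraMap k₂ Ω)).roots.toFinset.card = n ∧
       ∀ y : Ω, y ∈ (f.map (algebraMap k₂ Ω)).roots.toFinset ↔ aeval y f = 0) := by
    intro f hirr hdeg
    have hf0 : f ≠ 0 := hirr.ne_zero
    have hsep : f.Separable := PerfectField.separable_of_irreducible hirr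
    have hm0 : f.map (algebraMap k₂ Ω) ≠ 0 := by
      rwa [Ne, Polynomial.map_eq_zero]
    constructor
    · rw [Multiset.toFinset_card_of_nodup (nodup_roots hsep.map),
        splits_iff_card_roots.mp (IsAlgClosed.splits _),
        natDegree_map_eq_of_injective (algebraMap k₂ Ω).injective, hdeg]
    · intro y
      rw [Multiset.mem_toFinset, mem_roots hm0, IsRoot.def, eval_map, ← aeval_def]
  have hC2 : ∀ f : k₂[X], f.Monic → Irreducible f → f.natDegree = n → tildePoly q f = f →
      ∀ x : Ω, aeval x f = 0 → minpoly k₂ x = f ∧ x ∈ Bfin n := by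
    intro f hmon hirr hdeg htil x hx
    have hint : IsIntegral k₂ x := ⟨f, hmon, by rwa [← aeval_def]⟩
    have hminp : minpoly k₂ x = f := (minpoly.eq_of_irreducible_of_monic hirr hx hmon).symm
    have hkey := key_period q p a hqp ha k₂ hcard hint
    rw [hminp, hdeg] at hkey
    have hσn : σ₂^[n] x = x := by
      rw [← hkey]; exact Function.isPeriodicPt_minimalPeriod σ₂ x
    obtain ⟨hRcard, hRmem⟩ := hcardroots f hirr hdeg
    set R := (f.map (algebraMap k₂ Ω)).roots.toFinset with hR
    set O := (Finset.range n).image (fun j => σ₂^[j] x) with hO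
    have hOsub : O ⊆ R := by
      intro y hy
      obtain ⟨j, hj, rfl⟩ := Finset.mem_image.mp hy
      rw [hRmem]
      exact hrootiter f x hx j
    have hOcard : O.card = n := by
      rw [hO, Finset.card_image_of_injOn, Finset.card_range]
      intro i hi j hj hij
      have hinj := Function.iterate_injOn_Iio_minimalPeriod (f := σ₂) (x := x)
      rw [hkey] at hinj
      exact hinj (by simpa using hi) (by simpa using hj) hij
    have hOR : O = R := Finset.eq_of_subset_of_card_le hOsub (by rw [hRcard, hOcard])
    have hτroot : aeval (τ x) f = 0 := by
      have h1 := tildePoly_aeval q p a hqp f x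
      rw [htil, hx, zero_pow (by omega : q ≠ 0), mul_zero] at h1
      exact h1
    have hτO : τ x ∈ O := by
      rw [hOR, hRmem]; exact hτroot
    obtain ⟨j, hj, hjx⟩ := Finset.mem_image.mp hτO
    rw [Finset.mem_range] at hj
    have hoddc : ∃ c, Odd c ∧ 0 < c ∧ c ≤ 2 * n - 1 ∧ τ^[c] x = x := by
      rcases Nat.eq_zero_or_pos j with rfl | hj0
      · exact ⟨1, odd_one, by omega, by omega, by simpa using hjx.symm⟩
      · refine ⟨2 * j - 1, ⟨j - 1, by omega⟩, by omega, by omega, ?_⟩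
        have h2j : τ^[2 * j] x = τ x := by rw [htau2, hjx]
        have h2j' : τ^[2 * j - 1 + 1] x = τ x := by
          rw [show 2 * j - 1 + 1 = 2 * j by omega]
          exact h2j
        rw [Function.iterate_succ_apply'] at h2j'
        exact htau_inj h2j'
    obtain ⟨c, hcodd, hc0, hcle, hcx⟩ := hoddc
    set m := Function.minimalPeriod τ x with hm
    have hmc : m ∣ c := Function.IsPeriodicPt.minimalPeriod_dvd hcx
    have hm0 : 0 < m := by
      rcases Nat.eq_zero_or_pos m with h0 | h
      · rw [h0] at hmc
        have := Nat.eq_zero_of_zero_dvd hmc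
        omega
      · exact h
    have hnm : n ∣ m := by
      have h1 : τ^[m] x = x := Function.isPeriodicPt_minimalPeriod τ x
      have h2 : σ₂^[m] x = x := by
        rw [← htau2, two_mul, Function.iterate_add_apply, h1, h1]
      rw [← hkey]
      exact Function.IsPeriodicPt.minimalPeriod_dvd h2
    have hmn : m = n := by
      have hmle : m ≤ c := Nat.le_of_dvd hc0 hmc
      obtain ⟨k, hk⟩ := hnm
      rcases k with _ | _ | k
      · omega
      · omega
      · exfalso
        have h2n : 2 * n ≤ m := by
          rw [hk]
          calc 2 * n = n * 2 := by ring
            _ ≤ n * (k + 1 + 1) := Nat.mul_le_mul_left n (by omega)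
        omega
    refine ⟨hminp, ?_⟩
    rw [hmemBn]
    refine ⟨?_, hmn⟩
    rw [← hmn]
    exact Function.isPeriodicPt_minimalPeriod τ x
  have hC1 : ∀ x : Ω, x ∈ Bfin n → (minpoly k₂ x).Monic ∧ Irreducible (minpoly k₂ x) ∧
      (minpoly k₂ x).natDegree = n ∧ tildePoly q (minpoly k₂ x) = minpoly k₂ x := by
    intro x hxB
    obtain ⟨hxn, hxper⟩ := (hmemBn x).mp hxB
    obtain ⟨hint, hdeg⟩ := hperkey x hxper
    have hmon := minpoly.monic hint
    have hirr := minpoly.irreducible hint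
    refine ⟨hmon, hirr, hdeg, ?_⟩
    set f := minpoly k₂ x with hfdef
    set g := tildePoly q f with hg
    have hgmon : g.Monic := tildePoly_monic (by omega) hmon
    have hgdeg : g.natDegree = f.natDegree := tildePoly_natDegree (by omega) hmon
    set y := τ^[n - 1] x with hy
    have hyx : τ y = x := by
      have hstep : τ^[n - 1 + 1] x = x := by
        rw [show n - 1 + 1 = n by omega]; exact hxn
      rw [Function.iterate_succ_apply'] at hstep
      exact hstep
    have hyroot : aeval y f = 0 := by
      have hyeq : y = σ₂^[(n - 1) / 2] x := by
        rw [hy, ← htau2, show 2 * ((n - 1) / 2) = n - 1 by omega]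
      rw [hyeq]
      exact hrootiter f x (minpoly.aeval k₂ x) _
    have hxg : aeval x g = 0 := by
      have h1 := tildePoly_aeval q p a hqp f y
      rw [hyroot, zero_pow (by omega : q ≠ 0), mul_zero] at h1
      rw [← hyx]
      show aeval (-(y ^ q)) g = 0
      exact h1
    have hdvd : f ∣ g := minpoly.dvd k₂ x hxg
    exact (monic_dvd_eq f g hmon hgmon hdvd hgdeg.symm).symm
  set F' := (Bfin n).image (fun x => minpoly k₂ x) with hF'
  have hFeq : {f : k₂[X] | f.Monic ∧ Irreducible f ∧ f.natDegree = n ∧ tildePoly q f = f}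
      = ↑F' := by
    ext f
    simp only [Set.mem_setOf_eq, hF', Finset.coe_image, Set.mem_image, Finset.mem_coe]
    constructor
    · rintro ⟨hmon, hirr, hdeg, htil⟩
      have hdeg0 : f.degree ≠ 0 :=
        (Polynomial.natDegree_pos_iff_degree_pos.mp (by omega)).ne'
      obtain ⟨x, hx⟩ := IsAlgClosed.exists_aeval_eq_zero Ω f hdeg0
      obtain ⟨hminp, hxB⟩ := hC2 f hmon hirr hdeg htil x hx
      exact ⟨x, hxB, hminp⟩
    · rintro ⟨x, hxB, rfl⟩
      exact hC1 x hxB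
  rw [hFeq, Set.ncard_coe_finset]
  have hfib : (Bfin n).card = ∑ f ∈ F', ((Bfin n).filter (fun x => minpoly k₂ x = f)).card :=
    Finset.card_eq_sum_card_fiberwise (fun x hx => Finset.mem_image_of_mem _ hx)
  have hfibcard : ∀ f ∈ F', ((Bfin n).filter (fun x => minpoly k₂ x = f)).card = n := by
    intro f hf
    obtain ⟨x₀, hx₀B, rfl⟩ := Finset.mem_image.mp hf
    obtain ⟨hmon, hirr, hdeg, htil⟩ := hC1 x₀ hx₀B
    obtain ⟨hRcard, hRmem⟩ := hcardroots _ hirr hdeg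
    have hfilter : (Bfin n).filter (fun x => minpoly k₂ x = minpoly k₂ x₀) =
        ((minpoly k₂ x₀).map (algebraMap k₂ Ω)).roots.toFinset := by
      apply Finset.ext
      intro y
      rw [Finset.mem_filter, hRmem]
      constructor
      · rintro ⟨hyB, hyminp⟩
        rw [← hyminp]
        exact minpoly.aeval k₂ y
      · intro hy
        obtain ⟨h1, h2⟩ := hC2 _ hmon hirr hdeg htil y hy
        exact ⟨h2, h1⟩
    rw [hfilter, hRcard]
  rw [hfib, Finset.sum_congr rfl hfibcard, Finset.sum_const, smul_eq_mul]
  push_cast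
  ring
end

section
/- Let k = 𝔽_q and let a ∈ M_n(k) be a regular (cyclic) matrix whose characteristic polynomial is f(t)^e for a monic irreducible f of degree d (so n = de). Then the group of units of the centralizer of a in GL_n(k) is isomorphic to the unit group of 𝔽_{q^d}[u]/(u^e), and its order is q^n(1 - q^{-d}) = q^{de} - q^{d(e-1)}. -/
open Polynomial Matrix

set_option maxHeartbeats 1200000 in

private lemma matrix_ext_mulVec {k : Type*} [CommRing k] {n : ℕ}
    {A B : Matrix (Fin n) (Fin n) k} (h : ∀ v, A *ᵥ v = B *ᵥ v) : A = B := by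
  ext i j
  simpa using congrFun (h (Pi.single j 1)) i

private lemma sum_mulVec' {k : Type*} [CommRing k] {n : ℕ} {ι : Type*} (s : Finset ι)
    (M : ι → Matrix (Fin n) (Fin n) k) (v : Fin n → k) :
    (∑ i ∈ s, M i) *ᵥ v = ∑ i ∈ s, (M i *ᵥ v) :=
  _root_.map_sum (AddMonoidHom.mk' (fun A : Matrix (Fin n) (Fin n) k => A *ᵥ v)
    (fun A B => Matrix.add_mulVec A B v)) M s

private lemma comm_aeval {k : Type*} [CommRing k] {n : ℕ}
    {a b : Matrix (Fin n) (Fin n) k} (hb : b * a = a * b) (p : k[X]) :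
    b * aeval a p = aeval a p * b := by
  have hc : Commute b a := hb
  induction p using Polynomial.induction_on' with
  | add p q hp hq => simp [mul_add, add_mul, hp, hq]
  | monomial m c =>
    have h1 : Commute b (a ^ m) := hc.pow_right m
    simp only [aeval_monomial]
    calc b * (algebraMap k _ c * a ^ m) = algebraMap k _ c * (b * a ^ m) := by
          rw [← mul_assoc, ← Algebra.commutes c b, mul_assoc]
      _ = algebraMap k _ c * a ^ m * b := by rw [h1, mul_assoc]

/-- every matrix commuting with a regular primary matrix is a polynomial in it -/
private lemma comm_eq_aeval {k : Type*} [Field k] {n d e : ℕ}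
    (hn : n = d * e) (he : 0 < e)
    (a : Matrix (Fin n) (Fin n) k) (hreg : a.charpoly = minpoly k a)
    (f : k[X]) (hf : f.Monic) (hirr : Irreducible f) (hfd : f.natDegree = d)
    (hchar : a.charpoly = f ^ e)
    (b : Matrix (Fin n) (Fin n) k) (hb : b * a = a * b) :
    ∃ p : k[X], aeval a p = b := by
  classical
  have hmin : minpoly k a = f ^ e := by rw [← hreg, hchar]
  have hd : 0 < d := hfd ▸ hirr.natDegree_pos
  have hf0 : f ≠ 0 := hf.ne_zero
  have hfe : (f ^ e).natDegree = d * e := by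
    rw [natDegree_pow, hfd, mul_comm]
  have haev : aeval a (f ^ e) = 0 := by
    rw [← hchar]; exact Matrix.aeval_self_charpoly a
  -- choose cyclic vector
  have hM0 : aeval a (f ^ (e - 1)) ≠ 0 := by
    intro h0
    have hdvd : minpoly k a ∣ f ^ (e - 1) := minpoly.dvd k a h0
    rw [hmin] at hdvd
    have hne : (f : k[X]) ^ (e - 1) ≠ 0 := pow_ne_zero _ hf0
    have h2 := Polynomial.natDegree_le_of_dvd hdvd hne
    rw [hfe, natDegree_pow, hfd, mul_comm (e-1) d] at h2
    have : e ≤ e - 1 := le_of_mul_le_mul_left h2 hd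
    omega
  obtain ⟨v, hv⟩ : ∃ v, (aeval a (f ^ (e - 1))) *ᵥ v ≠ 0 := by
    by_contra hall
    push_neg at hall
    exact hM0 (matrix_ext_mulVec (by simpa using hall))
  set w : k[X] → (Fin n → k) := fun p => (aeval a p) *ᵥ v with hw
  have hwmul : ∀ p q : k[X], w (p * q) = (aeval a p) *ᵥ (w q) := by
    intro p q
    rw [hw]
    simp only
    rw [_root_.map_mul, ← Matrix.mulVec_mulVec]
  have hwadd : ∀ p q : k[X], w (p + q) = w p + w q := by
    intro p q; simp only [hw, _root_.map_add, Matrix.add_mulVec]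
  -- w kills no nonzero polynomial of degree < n
  have hker : ∀ g : k[X], g.degree < (n : WithBot ℕ) → w g = 0 → g = 0 := by
    intro g hdeg hg0
    by_contra hgne
    have hgd : g.natDegree < n := (Polynomial.natDegree_lt_iff_degree_lt hgne).mpr hdeg
    set h : k[X] := EuclideanDomain.gcd g (f ^ e) with hh
    have hφh : w h = 0 := by
      rw [hh, EuclideanDomain.gcd_eq_gcd_ab g (f ^ e)]
      have heq : g * EuclideanDomain.gcdA g (f ^ e) + f ^ e * EuclideanDomain.gcdB g (f ^ e)
          = EuclideanDomain.gcdA g (f ^ e) * g + EuclideanDomain.gcdB g (f ^ e) * (f ^ e) := by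
        ring
      rw [heq, hwadd, hwmul, hwmul]
      have hwg : w g = 0 := hg0
      have hwfe : w (f ^ e) = 0 := by
        rw [hw]; simp only; rw [haev, Matrix.zero_mulVec]
      rw [hwg, hwfe]
      simp
    have hhdvd : h ∣ f ^ e := EuclideanDomain.gcd_dvd_right _ _
    obtain ⟨j, hje, hassoc⟩ := (dvd_prime_pow hirr.prime e).mp hhdvd
    have hjlt : j < e := by
      rcases lt_or_eq_of_le hje with h' | rfl
      · exact h'
      · exfalso
        have hfeg : f ^ j ∣ g := hassoc.symm.dvd.trans (EuclideanDomain.gcd_dvd_left _ _)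
        have h3 := Polynomial.natDegree_le_of_dvd hfeg hgne
        rw [natDegree_pow, hfd] at h3
        have h4 : n ≤ g.natDegree := by rw [hn, mul_comm]; exact h3
        omega
    obtain ⟨u, hu⟩ := hassoc
    apply hv
    have h1 : (f : k[X]) ^ (e - 1) = (f ^ (e - 1 - j)) * ((u : k[X]) * h) := by
      rw [mul_comm (u : k[X]) h, hu, ← pow_add]
      congr 1
      omega
    show w (f ^ (e - 1)) = 0
    rw [h1, hwmul, hwmul, hφh]
    simp
  -- linear independence of w (X^i)
  have hli : LinearIndependent k (fun i : Fin n => w (X ^ (i : ℕ))) := by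
    rw [Fintype.linearIndependent_iff]
    intro c hc i
    set g : k[X] := ∑ i : Fin n, C (c i) * X ^ (i : ℕ) with hg
    have hgdeg : g.degree < (n : WithBot ℕ) := by
      refine lt_of_le_of_lt (Polynomial.degree_sum_le _ _) ?_
      rw [Finset.sup_lt_iff (by exact_mod_cast WithBot.bot_lt_coe n)]
      intro i _
      refine lt_of_le_of_lt (Polynomial.degree_C_mul_X_pow_le _ _) ?_
      exact_mod_cast i.isLt
    have hφg : w g = 0 := by
      have heq2 : w g = ∑ i : Fin n, c i • w (X ^ (i : ℕ)) := by
        rw [hg]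
        show (aeval a (∑ i : Fin n, C (c i) * X ^ (i : ℕ))) *ᵥ v = _
        rw [_root_.map_sum, sum_mulVec']
        refine Finset.sum_congr rfl fun i _ => ?_
        rw [_root_.map_mul, aeval_C, ← Algebra.smul_def, Matrix.smul_mulVec]
      rw [heq2, hc]
    have hg0 : g = 0 := hker g hgdeg hφg
    have hco := congrArg (fun p : k[X] => p.coeff (i : ℕ)) hg0
    simp only [hg, Polynomial.finset_sum_coeff, Polynomial.coeff_C_mul,
      Polynomial.coeff_X_pow, coeff_zero, mul_ite, mul_one, mul_zero,
      Fin.val_eq_val] at hco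
    simpa using hco
  -- surjectivity of w
  have hsurj : ∀ u : Fin n → k, ∃ p : k[X], (aeval a p) *ᵥ v = u := by
    intro u
    have hspan := hli.span_eq_top_of_card_eq_finrank'
      (by simp [Module.finrank_fin_fun])
    have hu : u ∈ Submodule.span k (Set.range fun i : Fin n => w (X ^ (i : ℕ))) := by
      rw [hspan]; trivial
    rw [Finsupp.mem_span_range_iff_exists_finsupp] at hu
    obtain ⟨c, hcu⟩ := hu
    refine ⟨∑ i ∈ c.support, C (c i) * X ^ (i : ℕ), ?_⟩
    rw [← hcu, Finsupp.sum]
    rw [_root_.map_sum, sum_mulVec']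
    refine Finset.sum_congr rfl fun i _ => ?_
    rw [_root_.map_mul, aeval_C, ← Algebra.smul_def, Matrix.smul_mulVec]
  -- conclude
  obtain ⟨p, hp⟩ := hsurj (b *ᵥ v)
  refine ⟨p, ?_⟩
  apply matrix_ext_mulVec
  intro u'
  -- suffices to check on vectors of the form (aeval a r) *ᵥ v
  have key : ∀ r : k[X], (aeval a p) *ᵥ ((aeval a r) *ᵥ v) = b *ᵥ ((aeval a r) *ᵥ v) := by
    intro r
    calc (aeval a p) *ᵥ ((aeval a r) *ᵥ v)
        = (aeval a r) *ᵥ ((aeval a p) *ᵥ v) := by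
          rw [Matrix.mulVec_mulVec, Matrix.mulVec_mulVec, ← _root_.map_mul,
            ← _root_.map_mul, mul_comm p r]
      _ = (aeval a r) *ᵥ (b *ᵥ v) := by rw [hp]
      _ = (b * aeval a r) *ᵥ v := by rw [Matrix.mulVec_mulVec, ← comm_aeval hb r]
      _ = b *ᵥ ((aeval a r) *ᵥ v) := by rw [← Matrix.mulVec_mulVec]
  obtain ⟨r, hr⟩ := hsurj u'
  rw [← hr]
  exact key r

/-- The centralizer of a matrix `a` inside the unit group `GL_n(k)` of the matrix
ring, as a subgroup. -/
def matrixUnitsCentralizer {k : Type*} [CommRing k] {n : ℕ}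
    (a : Matrix (Fin n) (Fin n) k) : Subgroup (Matrix (Fin n) (Fin n) k)ˣ where
  carrier := {g | (g : Matrix (Fin n) (Fin n) k) * a = a * g}
  one_mem' := by simp
  mul_mem' := by
    intro x y hx hy
    simp only [Set.mem_setOf_eq, Units.val_mul] at *
    rw [mul_assoc, hy, ← mul_assoc, hx, mul_assoc]
  inv_mem' := by
    intro x hx
    simp only [Set.mem_setOf_eq] at *
    calc (↑x⁻¹ : Matrix (Fin n) (Fin n) k) * a
        = ↑x⁻¹ * ((a * ↑x) * ↑x⁻¹) := by rw [mul_assoc a, Units.mul_inv, mul_one]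
      _ = ↑x⁻¹ * ((↑x * a) * ↑x⁻¹) := by rw [hx]
      _ = (↑x⁻¹ * ↑x) * (a * ↑x⁻¹) := by noncomm_ring
      _ = a * ↑x⁻¹ := by rw [Units.inv_mul, one_mul]


/-- centralizer is isomorphic to units of k[X]/(f^e) -/
private lemma centralizer_iso {k : Type*} [Field k] {n d e : ℕ}
    (hn : n = d * e) (he : 0 < e)
    (a : Matrix (Fin n) (Fin n) k) (hreg : a.charpoly = minpoly k a)
    (f : k[X]) (hf : f.Monic) (hirr : Irreducible f) (hfd : f.natDegree = d)
    (hchar : a.charpoly = f ^ e) :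
    Nonempty ((k[X] ⧸ (Ideal.span {f ^ e} : Ideal k[X]))ˣ ≃* (matrixUnitsCentralizer a)) := by
  classical
  have hmin : minpoly k a = f ^ e := by rw [← hreg, hchar]
  have haev : aeval a (f ^ e) = 0 := by
    rw [← hchar]; exact Matrix.aeval_self_charpoly a
  set I : Ideal k[X] := Ideal.span {f ^ e} with hIdef
  have hkill : ∀ g ∈ I, aeval a g = 0 := by
    intro g hg
    rw [hIdef, Ideal.mem_span_singleton] at hg
    obtain ⟨c, rfl⟩ := hg
    rw [_root_.map_mul, haev, zero_mul]
  let Φ : (k[X] ⧸ I) →+* Matrix (Fin n) (Fin n) k :=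
    Ideal.Quotient.lift I (aeval a).toRingHom hkill
  have hΦmk : ∀ g : k[X], Φ (Ideal.Quotient.mk I g) = aeval a g := fun g =>
    Ideal.Quotient.lift_mk I _ _
  have hΦinj : Function.Injective Φ := by
    rw [injective_iff_map_eq_zero]
    intro x hx
    obtain ⟨g, rfl⟩ := Ideal.Quotient.mk_surjective x
    rw [hΦmk] at hx
    have hdvd := minpoly.dvd k a hx
    rw [hmin] at hdvd
    rw [Ideal.Quotient.eq_zero_iff_mem, hIdef, Ideal.mem_span_singleton]
    exact hdvd
  have hΦcomm : ∀ x : k[X] ⧸ I, Φ x * a = a * Φ x := by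
    intro x
    obtain ⟨g, rfl⟩ := Ideal.Quotient.mk_surjective x
    rw [hΦmk]
    have h1 : a * aeval a g = aeval a (X * g) := by rw [_root_.map_mul, aeval_X]
    have h2 : aeval a g * a = aeval a (g * X) := by rw [_root_.map_mul, aeval_X]
    rw [h1, h2, mul_comm g X]
  let Θ : (k[X] ⧸ I)ˣ →* (matrixUnitsCentralizer a) :=
    MonoidHom.codRestrict (Units.map Φ.toMonoidHom) (matrixUnitsCentralizer a)
      (fun u => hΦcomm u.val)
  have hΘinj : Function.Injective Θ := by
    intro x y hxy
    exact Units.map_injective hΦinj (congrArg Subtype.val hxy)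
  have hΘsurj : Function.Surjective Θ := by
    rintro ⟨g, hg⟩
    have hg' : (g : Matrix (Fin n) (Fin n) k) * a = a * g := hg
    have hginv : ((g⁻¹ : _) : Matrix (Fin n) (Fin n) k) * a = a * (g⁻¹ : _) :=
      (matrixUnitsCentralizer a).inv_mem hg
    obtain ⟨P, hP⟩ := comm_eq_aeval hn he a hreg f hf hirr hfd hchar g hg'
    obtain ⟨S, hS⟩ := comm_eq_aeval hn he a hreg f hf hirr hfd hchar _ hginv
    have h1 : Ideal.Quotient.mk I P * Ideal.Quotient.mk I S = 1 := by
      apply hΦinj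
      rw [_root_.map_mul, _root_.map_one, hΦmk, hΦmk, hP, hS]
      exact g.mul_inv
    have h2 : Ideal.Quotient.mk I S * Ideal.Quotient.mk I P = 1 := by
      apply hΦinj
      rw [_root_.map_mul, _root_.map_one, hΦmk, hΦmk, hP, hS]
      exact g.inv_mul
    refine ⟨⟨Ideal.Quotient.mk I P, Ideal.Quotient.mk I S, h1, h2⟩, ?_⟩
    apply Subtype.ext
    apply Units.ext
    show Φ (Ideal.Quotient.mk I P) = g
    rw [hΦmk, hP]
  exact ⟨MulEquiv.ofBijective Θ ⟨hΘinj, hΘsurj⟩⟩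


private lemma quot_finite {L : Type*} [Field L] [Finite L] {g : L[X]} (hg : g ≠ 0) :
    Finite (L[X] ⧸ (Ideal.span {g} : Ideal L[X])) := by
  let pb := AdjoinRoot.powerBasis hg
  exact Finite.of_equiv _ pb.basis.equivFun.toEquiv.symm

private lemma quot_card {L : Type*} [Field L] [Fintype L] {g : L[X]} (hg : g ≠ 0) :
    Nat.card (L[X] ⧸ (Ideal.span {g} : Ideal L[X])) = Fintype.card L ^ g.natDegree := by
  let pb := AdjoinRoot.powerBasis hg
  have h1 : Nat.card (AdjoinRoot g) = Nat.card (Fin pb.dim → L) :=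
    Nat.card_congr pb.basis.equivFun.toEquiv
  have h2 : pb.dim = g.natDegree := rfl
  rw [show (L[X] ⧸ (Ideal.span {g} : Ideal L[X])) = AdjoinRoot g from rfl, h1, h2]
  simp [Nat.card_eq_fintype_card, Fintype.card_fun]

private lemma count_units (K : Type*) [Field K] [Fintype K] {e : ℕ} (he : 0 < e) :
    Nat.card (K[X] ⧸ (Ideal.span {X ^ e} : Ideal K[X]))ˣ
      = Fintype.card K ^ e - Fintype.card K ^ (e - 1) := by
  classical
  set I : Ideal K[X] := Ideal.span {X ^ e} with hI
  have hkill : ∀ g ∈ I, aeval (0 : K) g = 0 := by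
    intro g hg
    rw [hI, Ideal.mem_span_singleton] at hg
    obtain ⟨c, rfl⟩ := hg
    rw [_root_.map_mul, _root_.map_pow, aeval_X, zero_pow he.ne', zero_mul]
  let π : (K[X] ⧸ I) →ₐ[K] K := Ideal.Quotient.liftₐ I (aeval 0) hkill
  have hπmk : ∀ g : K[X], π (Ideal.Quotient.mk I g) = g.coeff 0 := by
    intro g
    show aeval (0 : K) g = _
    rw [coe_aeval_eq_eval, coeff_zero_eq_eval_zero]
  have hXe : Ideal.Quotient.mk I (X ^ e : K[X]) = 0 := by
    rw [Ideal.Quotient.eq_zero_iff_mem, hI]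
    exact Ideal.mem_span_singleton_self _
  -- units are exactly elements with nonzero image under π
  have hunit : ∀ x : K[X] ⧸ I, IsUnit x ↔ π x ≠ 0 := by
    intro x
    obtain ⟨g, rfl⟩ := Ideal.Quotient.mk_surjective x
    constructor
    · rintro ⟨u, hu⟩ h0
      have h1 : π (u.val * u.inv) = 1 := by rw [u.val_inv, _root_.map_one]
      rw [_root_.map_mul, hu, h0, zero_mul] at h1
      exact zero_ne_one h1
    · intro h0
      rw [hπmk] at h0
      have hX : ¬ (X : K[X]) ∣ g := by
        rw [Polynomial.X_dvd_iff]; exact h0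
      have hcop : IsCoprime ((X : K[X]) ^ e) g :=
        ((Polynomial.irreducible_X.coprime_iff_not_dvd).mpr hX).pow_left
      obtain ⟨u, w, huv⟩ := hcop
      refine IsUnit.of_mul_eq_one (Ideal.Quotient.mk I w) ?_
      have := congrArg (Ideal.Quotient.mk I) huv
      rw [_root_.map_add, _root_.map_mul, _root_.map_mul, hXe, mul_zero, zero_add, _root_.map_one] at this
      rw [mul_comm] at this
      exact this
  -- cardinalities
  have hfin : Finite (K[X] ⧸ I) := quot_finite (pow_ne_zero e X_ne_zero)
  letI : Fintype (K[X] ⧸ I) := Fintype.ofFinite _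
  have hcardA : Nat.card (K[X] ⧸ I) = Fintype.card K ^ e := by
    rw [hI]
    rw [quot_card (pow_ne_zero e X_ne_zero)]
    rw [natDegree_pow, natDegree_X, mul_one]
  -- finite dimensional structure
  letI : Module.Finite K (K[X] ⧸ I) :=
    (AdjoinRoot.powerBasis (pow_ne_zero e (X_ne_zero (R := K)))).finite
  have hfr : Module.finrank K (K[X] ⧸ I) = e := by
    rw [show Module.finrank K (K[X] ⧸ I) = (AdjoinRoot.powerBasis
      (pow_ne_zero e (X_ne_zero (R := K)))).dim from PowerBasis.finrank _]
    show (X ^ e : K[X]).natDegree = e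
    rw [natDegree_pow, natDegree_X, mul_one]
  -- kernel of π
  have hπsurj : Function.Surjective π := fun c =>
    ⟨Ideal.Quotient.mk I (C c), by rw [hπmk, coeff_C_zero]⟩
  have hrange : LinearMap.range π.toLinearMap = ⊤ := by
    rw [LinearMap.range_eq_top]; exact hπsurj
  have hkerfr : Module.finrank K (LinearMap.ker π.toLinearMap) = e - 1 := by
    have := LinearMap.finrank_range_add_finrank_ker π.toLinearMap
    rw [hrange, hfr] at this
    have h1 : Module.finrank K (⊤ : Submodule K K) = 1 := by
      rw [finrank_top, Module.finrank_self]
    omega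
  have hkercard : Nat.card (LinearMap.ker π.toLinearMap) = Fintype.card K ^ (e - 1) := by
    letI : Fintype (LinearMap.ker π.toLinearMap) := Fintype.ofFinite _
    rw [Nat.card_eq_fintype_card, Module.card_eq_pow_finrank (K := K), hkerfr]
  -- count units
  letI : Fintype (K[X] ⧸ I)ˣ := Fintype.ofFinite _
  have e1 : (K[X] ⧸ I)ˣ ≃ {x : K[X] ⧸ I // IsUnit x} :=
    { toFun := fun u => ⟨u.val, u.isUnit⟩
      invFun := fun x => x.2.unit
      left_inv := fun u => Units.ext u.isUnit.unit_spec
      right_inv := fun x => Subtype.ext x.2.unit_spec }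
  have e2 : {x : K[X] ⧸ I // IsUnit x} ≃ {x : K[X] ⧸ I // ¬ π x = 0} :=
    Equiv.subtypeEquivRight (fun x => by rw [hunit x])
  have e3 : {x : K[X] ⧸ I // π x = 0} ≃ LinearMap.ker π.toLinearMap :=
    Equiv.subtypeEquivRight (fun x => by simp [LinearMap.mem_ker])
  have hcount : Nat.card (K[X] ⧸ I)ˣ
      = Nat.card (K[X] ⧸ I) - Nat.card {x : K[X] ⧸ I // π x = 0} := by
    rw [Nat.card_congr (e1.trans e2)]
    rw [Nat.card_eq_fintype_card, Nat.card_eq_fintype_card, Nat.card_eq_fintype_card]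
    rw [Fintype.card_subtype_compl]
  rw [hcount, hcardA, Nat.card_congr e3, hkercard]

set_option maxHeartbeats 1200000 in
private lemma ring_equiv_lemma {k K : Type*} [Field k] [Fintype k] [Field K] [Fintype K]
    {d e : ℕ} (he : 0 < e) {f : k[X]} (hf : f.Monic) (hirr : Irreducible f)
    (hfd : f.natDegree = d)
    (hK : Fintype.card K = Fintype.card k ^ d) :
    Nonempty ((K[X] ⧸ (Ideal.span {(X : K[X]) ^ e} : Ideal K[X])) ≃+*
      (k[X] ⧸ (Ideal.span {f ^ e} : Ideal k[X]))) := by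
  classical
  have hd : 0 < d := hfd ▸ hirr.natDegree_pos
  set p : ℕ := ringChar k with hpdef
  haveI : CharP k p := ringChar.charP k
  obtain ⟨v, hp, hqv⟩ := FiniteField.card k p
  haveI : Fact p.Prime := ⟨hp⟩
  set I : Ideal k[X] := Ideal.span {f ^ e} with hIdef
  set J : Ideal k[X] := Ideal.span {f} with hJdef
  have hf0 : f ≠ 0 := hf.ne_zero
  have hfe0 : f ^ e ≠ 0 := pow_ne_zero _ hf0
  have hIne : I ≠ ⊤ := by
    rw [hIdef, Ne, Ideal.span_singleton_eq_top]
    intro hu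
    have h2 := congrArg natDegree ((hf.pow e).eq_one_of_isUnit hu)
    rw [natDegree_pow, hfd, natDegree_one] at h2
    exact Nat.mul_ne_zero he.ne' hd.ne' h2
  haveI : Nontrivial (k[X] ⧸ I) := Ideal.Quotient.nontrivial_iff.mpr hIne
  haveI : CharP (k[X] ⧸ I) p :=
    charP_of_injective_ringHom (algebraMap k (k[X] ⧸ I)).injective p
  -- residue field F := k[X] ⧸ J
  haveI hJmax : J.IsMaximal := PrincipalIdealRing.isMaximal_of_irreducible hirr
  letI : Field (k[X] ⧸ J) := Ideal.Quotient.field J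
  haveI : Finite (k[X] ⧸ J) := quot_finite hf0
  letI : Fintype (k[X] ⧸ J) := Fintype.ofFinite _
  have hFcard : Fintype.card (k[X] ⧸ J) = Fintype.card k ^ d := by
    rw [← Nat.card_eq_fintype_card, hJdef, quot_card hf0, hfd]
  have hKF : Fintype.card K = Fintype.card (k[X] ⧸ J) := by rw [hK, hFcard]
  let ι : K ≃+* (k[X] ⧸ J) := FiniteField.ringEquivOfCardEq hKF
  -- the Teichmüller-type section τ : F →+* R
  set m : ℕ := (v : ℕ) * d * e with hmdef
  have hpm : p ^ m = Fintype.card (k[X] ⧸ J) ^ e := by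
    rw [hFcard, hqv, hmdef, ← pow_mul, ← pow_mul, mul_assoc]
  have hpm_ge : e ≤ p ^ m := by
    calc e ≤ 2 ^ e := (Nat.lt_two_pow_self).le
    _ ≤ (Fintype.card (k[X] ⧸ J)) ^ e := Nat.pow_le_pow_left Fintype.one_lt_card e
    _ = p ^ m := hpm.symm
  let σ : k[X] →+* (k[X] ⧸ I) :=
    (iterateFrobenius (k[X] ⧸ I) p m).comp (Ideal.Quotient.mk I)
  have hσdef : ∀ g : k[X], σ g = (Ideal.Quotient.mk I g) ^ p ^ m := fun g => rfl
  have hσJ : ∀ g ∈ J, σ g = 0 := by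
    intro g hg
    rw [hJdef, Ideal.mem_span_singleton] at hg
    obtain ⟨c, rfl⟩ := hg
    rw [hσdef, ← _root_.map_pow, Ideal.Quotient.eq_zero_iff_mem, hIdef,
      Ideal.mem_span_singleton, mul_pow]
    exact dvd_mul_of_dvd_left (pow_dvd_pow f hpm_ge) _
  let τ : (k[X] ⧸ J) →+* (k[X] ⧸ I) := Ideal.Quotient.lift J σ hσJ
  have hIJ : I ≤ J := by
    rw [hIdef, hJdef]
    exact Ideal.span_singleton_le_span_singleton.mpr (dvd_pow_self f he.ne')
  let π : (k[X] ⧸ I) →+* (k[X] ⧸ J) := Ideal.Quotient.factor hIJ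
  have hπτ : ∀ x : k[X] ⧸ J, π (τ x) = x := by
    intro x
    obtain ⟨g, rfl⟩ := Ideal.Quotient.mk_surjective x
    show π (σ g) = _
    rw [hσdef, _root_.map_pow, Ideal.Quotient.factor_mk, hpm]
    exact FiniteField.pow_card_pow e _
  have hπmkf : π (Ideal.Quotient.mk I f) = 0 := by
    rw [Ideal.Quotient.factor_mk, Ideal.Quotient.eq_zero_iff_mem, hJdef]
    exact Ideal.mem_span_singleton_self f
  -- units in R
  have hunitR : ∀ x : k[X] ⧸ I, π x ≠ 0 → IsUnit x := by
    intro x hx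
    obtain ⟨g, rfl⟩ := Ideal.Quotient.mk_surjective x
    have hgJ : ¬ f ∣ g := by
      intro hdvd
      apply hx
      rw [Ideal.Quotient.factor_mk, Ideal.Quotient.eq_zero_iff_mem, hJdef,
        Ideal.mem_span_singleton]
      exact hdvd
    have hcop : IsCoprime (f ^ e) g := ((hirr.coprime_iff_not_dvd).mpr hgJ).pow_left
    obtain ⟨u, w, huw⟩ := hcop
    refine IsUnit.of_mul_eq_one (Ideal.Quotient.mk I w) ?_
    have hmke : Ideal.Quotient.mk I (f ^ e) = 0 := by
      rw [Ideal.Quotient.eq_zero_iff_mem, hIdef]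
      exact Ideal.mem_span_singleton_self _
    have h3 := congrArg (Ideal.Quotient.mk I) huw
    rw [_root_.map_add, _root_.map_mul, _root_.map_mul, hmke, mul_zero, zero_add, _root_.map_one] at h3
    rw [mul_comm] at h3
    exact h3
  -- the map Ψ : K[X] →+* R
  let φK : K →+* (k[X] ⧸ I) := τ.comp ι.toRingHom
  let Ψ : K[X] →+* (k[X] ⧸ I) := eval₂RingHom φK (Ideal.Quotient.mk I f)
  have hΨX : Ψ X = Ideal.Quotient.mk I f := eval₂_X _ _
  have hΨC : ∀ c : K, Ψ (C c) = φK c := fun c => eval₂_C _ _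
  have hfe_zero : (Ideal.Quotient.mk I f) ^ e = 0 := by
    rw [← _root_.map_pow, Ideal.Quotient.eq_zero_iff_mem, hIdef]
    exact Ideal.mem_span_singleton_self _
  have hΨkill : ∀ g ∈ (Ideal.span {(X : K[X]) ^ e} : Ideal K[X]), Ψ g = 0 := by
    intro g hg
    rw [Ideal.mem_span_singleton] at hg
    obtain ⟨c, rfl⟩ := hg
    rw [_root_.map_mul, _root_.map_pow, hΨX, hfe_zero, zero_mul]
  let E : (K[X] ⧸ (Ideal.span {(X : K[X]) ^ e} : Ideal K[X])) →+* (k[X] ⧸ I) :=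
    Ideal.Quotient.lift _ Ψ hΨkill
  -- splitting of Ψ
  have hΨsplit : ∀ g : K[X],
      Ψ g = Ideal.Quotient.mk I f * Ψ g.divX + φK (g.coeff 0) := by
    intro g
    conv_lhs => rw [← X_mul_divX_add g]
    rw [_root_.map_add, _root_.map_mul, hΨX, hΨC]
  have hπφK : ∀ c : K, π (φK c) = ι c := fun c => hπτ (ι c)
  have hπΨ : ∀ g : K[X], π (Ψ g) = ι (g.coeff 0) := by
    intro g
    rw [hΨsplit g, _root_.map_add, _root_.map_mul, hπmkf, zero_mul, zero_add, hπφK]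
  -- key divisibility
  have key : ∀ mm : ℕ, mm ≤ e → ∀ g : K[X],
      (Ideal.Quotient.mk I f) ^ (e - mm) * Ψ g = 0 → (X : K[X]) ^ mm ∣ g := by
    intro mm
    induction mm with
    | zero => intro _ g _; simp
    | succ mm ih =>
      intro hmm g hg
      by_cases h0 : g.coeff 0 = 0
      · have hgX : g = X * g.divX := by
          conv_lhs => rw [← X_mul_divX_add g]
          rw [h0, _root_.map_zero, add_zero]
        have h2 : (Ideal.Quotient.mk I f) ^ (e - mm) * Ψ g.divX = 0 := by
          have h3 : Ψ g = Ideal.Quotient.mk I f * Ψ g.divX := by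
            conv_lhs => rw [hgX]
            rw [_root_.map_mul, hΨX]
          rw [h3] at hg
          rw [show e - mm = (e - (mm + 1)) + 1 by omega, pow_succ, mul_assoc]
          exact hg
        have h4 := ih (by omega) g.divX h2
        rw [hgX, pow_succ']
        exact mul_dvd_mul_left X h4
      · exfalso
        have hu : IsUnit (Ψ g) := by
          apply hunitR
          rw [hπΨ]
          intro hzero
          exact h0 (ι.injective (by rw [hzero, _root_.map_zero]))
        obtain ⟨u, hu⟩ := hu
        rw [← hu, Units.mul_left_eq_zero] at hg
        rw [← _root_.map_pow, Ideal.Quotient.eq_zero_iff_mem, hIdef,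
          Ideal.mem_span_singleton] at hg
        have h4 := Polynomial.natDegree_le_of_dvd hg (pow_ne_zero _ hf0)
        rw [natDegree_pow, natDegree_pow, hfd] at h4
        have h4' : d * e ≤ d * (e - (mm + 1)) := by
          rw [mul_comm d e, mul_comm d (e - (mm + 1))]
          exact h4
        have h5 : e ≤ e - (mm + 1) := Nat.le_of_mul_le_mul_left h4' hd
        omega
  -- injectivity of E
  have hEinj : Function.Injective E := by
    rw [injective_iff_map_eq_zero]
    intro x hx
    obtain ⟨g, rfl⟩ := Ideal.Quotient.mk_surjective x
    rw [Ideal.Quotient.lift_mk] at hx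
    have h6 := key e le_rfl g (by rw [Nat.sub_self, pow_zero, one_mul]; exact hx)
    rw [Ideal.Quotient.eq_zero_iff_mem, Ideal.mem_span_singleton]
    exact h6
  -- cardinalities
  haveI finA : Finite (K[X] ⧸ (Ideal.span {(X : K[X]) ^ e} : Ideal K[X])) :=
    quot_finite (pow_ne_zero e X_ne_zero)
  haveI finR : Finite (k[X] ⧸ I) := quot_finite hfe0
  have hc : Nat.card (K[X] ⧸ (Ideal.span {(X : K[X]) ^ e} : Ideal K[X]))
      = Nat.card (k[X] ⧸ I) := by
    rw [quot_card (pow_ne_zero e X_ne_zero), hIdef, quot_card hfe0,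
      natDegree_pow, natDegree_pow, natDegree_X, hfd, mul_one, hK, ← pow_mul,
      mul_comm e d]
  exact ⟨RingEquiv.ofBijective E ((Nat.bijective_iff_injective_and_card E).mpr ⟨hEinj, hc⟩)⟩

/-- `k = 𝔽_q`, `a ∈ M_n(k)` regular with characteristic polynomial
`f^e`, `f` monic irreducible of degree `d`, `n = d·e`. Then the centralizer of `a`
in `GL_n(k)` is isomorphic to the unit group of `𝔽_{q^d}[u]/(u^e)` and has order
`q^(d·e) - q^(d·(e-1))`. -/
theorem stmt8 (k : Type*) [Field k] [Fintype k] (q n d e : ℕ) (hq : Fintype.card k = q)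
    (hn : n = d * e) (he : 0 < e)
    (a : Matrix (Fin n) (Fin n) k) (hreg : a.charpoly = minpoly k a)
    (f : k[X]) (hf : f.Monic) (hirr : Irreducible f) (hfd : f.natDegree = d)
    (hchar : a.charpoly = f ^ e)
    (K : Type*) [Field K] [Fintype K] (hK : Fintype.card K = q ^ d) :
    Nonempty ((matrixUnitsCentralizer a) ≃*
        (Polynomial K ⧸ Ideal.span ({(X : Polynomial K) ^ e} : Set (Polynomial K)))ˣ) ∧
      Nat.card (matrixUnitsCentralizer a) = q ^ (d * e) - q ^ (d * (e - 1)) := by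
  classical
  obtain ⟨E⟩ := ring_equiv_lemma (k := k) (K := K) he hf hirr hfd (by rw [hK, hq])
  obtain ⟨Θ⟩ := centralizer_iso hn he a hreg f hf hirr hfd hchar
  have iso : (matrixUnitsCentralizer a) ≃*
      (Polynomial K ⧸ Ideal.span ({(X : Polynomial K) ^ e} : Set (Polynomial K)))ˣ :=
    (Θ.symm).trans (Units.mapEquiv E.symm.toMulEquiv)
  refine ⟨⟨iso⟩, ?_⟩
  have h1 := Nat.card_congr iso.toEquiv
  rw [h1, count_units K he, hK, ← pow_mul, ← pow_mul]
end

section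
/- Let x ∈ M_n(𝔬_ℓ) where 𝔬_ℓ = 𝔬/𝔭^ℓ is a finite quotient of a complete discrete valuation ring, and suppose the reduction of x modulo 𝔭 is a regular (cyclic) matrix over the residue field k. Then x is regular over 𝔬_ℓ and the centralizer of x in M_n(𝔬_ℓ) equals 𝔬_ℓ[x], the subalgebra generated by x, which is a free 𝔬_ℓ-module of rank n. -/
set_option maxHeartbeats 1000000

open Polynomial

section Aux

variable {R : Type*} [CommRing R] {n : ℕ}

/-- `M ↦ M *ᵥ v` as a linear map in the matrix argument. -/
def mulVecAt (v : Fin n → R) : Matrix (Fin n) (Fin n) R →ₗ[R] (Fin n → R) where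
  toFun M := M.mulVec v
  map_add' A B := Matrix.add_mulVec A B v
  map_smul' c A := Matrix.smul_mulVec c A v

@[simp] lemma mulVecAt_apply (v : Fin n → R) (M : Matrix (Fin n) (Fin n) R) :
    mulVecAt v M = M.mulVec v := rfl

/-- If a matrix commutes with `x` and kills a cyclic vector for `x`, it is zero. -/
lemma kill_lemma {x c : Matrix (Fin n) (Fin n) R} {v : Fin n → R}
    (hv : Submodule.span R (Set.range fun i : Fin n => (x ^ (i : ℕ)).mulVec v) = ⊤)
    (hcomm : x * c = c * x) (h0 : c.mulVec v = 0) : c = 0 := by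
  have hpow : ∀ i : ℕ, c.mulVec ((x ^ i).mulVec v) = 0 := by
    intro i
    rw [Matrix.mulVec_mulVec, ← ((show Commute x c from hcomm).pow_left i).eq,
      ← Matrix.mulVec_mulVec, h0, Matrix.mulVec_zero]
  have hker : (⊤ : Submodule R (Fin n → R)) ≤ LinearMap.ker c.mulVecLin := by
    rw [← hv, Submodule.span_le]
    rintro _ ⟨i, rfl⟩
    simpa [Matrix.mulVecLin_apply] using hpow i
  have hc : c.mulVecLin = 0 := LinearMap.ker_eq_top.mp (top_le_iff.mp hker)
  ext i j
  have := congrFun (congrArg (fun f => f.toFun) hc) (Pi.single j 1)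
  simp only [LinearMap.zero_apply, LinearMap.toFun_eq_coe] at this
  have h2 := congrFun this i
  simpa [Matrix.mulVecLin_apply, Matrix.mulVec_single] using h2

/-- Parts (2) and (3): over any commutative ring, existence of a cyclic vector
implies the centralizer is the generated subalgebra and it is free of rank `n`. -/
lemma parts23 (x : Matrix (Fin n) (Fin n) R) (v : Fin n → R)
    (hv : Submodule.span R (Set.range fun i : Fin n => (x ^ (i : ℕ)).mulVec v) = ⊤) :
    (∀ b : Matrix (Fin n) (Fin n) R,
        x * b = b * x ↔ b ∈ Algebra.adjoin R ({x} : Set _)) ∧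
      Nonempty (Module.Basis (Fin n) R (Algebra.adjoin R ({x} : Set _))) := by
  classical
  have hadj_comm : ∀ b ∈ Algebra.adjoin R ({x} : Set _), x * b = b * x := by
    intro b hb
    rw [Algebra.adjoin_singleton_eq_range_aeval] at hb
    obtain ⟨p, rfl⟩ := hb
    calc x * aeval x p = aeval x (X * p) := by rw [map_mul, aeval_X]
    _ = aeval x (p * X) := by rw [mul_comm]
    _ = aeval x p * x := by rw [map_mul, aeval_X]
  have hcent : ∀ b : Matrix (Fin n) (Fin n) R,
      x * b = b * x ↔ b ∈ Algebra.adjoin R ({x} : Set _) := by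
    intro b
    constructor
    · intro hb
      have hmem : b.mulVec v ∈
          Submodule.span R (Set.range fun i : Fin n => (x ^ (i : ℕ)).mulVec v) := by
        rw [hv]; trivial
      obtain ⟨c, hc⟩ := (Submodule.mem_span_range_iff_exists_fun R).mp hmem
      set pm : Matrix (Fin n) (Fin n) R := ∑ i : Fin n, c i • x ^ (i : ℕ) with hpm
      have hpm_adj : pm ∈ Algebra.adjoin R ({x} : Set _) := by
        rw [hpm]
        apply Subalgebra.sum_mem
        intro i _
        apply Subalgebra.smul_mem
        apply Subalgebra.pow_mem
        exact Algebra.subset_adjoin rfl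
      have hpm_v : pm.mulVec v = b.mulVec v := by
        have h1 : pm.mulVec v = ∑ i : Fin n, c i • ((x ^ (i : ℕ)).mulVec v) := by
          rw [← mulVecAt_apply, hpm, map_sum]
          simp [Matrix.smul_mulVec]
        rw [h1, hc]
      have hpm_comm : x * pm = pm * x := hadj_comm pm hpm_adj
      have hdiff : b - pm = 0 := by
        apply kill_lemma hv
        · rw [mul_sub, sub_mul, hb, hpm_comm]
        · rw [Matrix.sub_mulVec, hpm_v, sub_self]
      have : b = pm := by rwa [sub_eq_zero] at hdiff
      rw [this]; exact hpm_adj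
    · exact hadj_comm b
  have hxi : ∀ i : ℕ, x ^ i ∈ Algebra.adjoin R ({x} : Set (Matrix (Fin n) (Fin n) R)) := by
    intro i
    apply Subalgebra.pow_mem
    exact Algebra.subset_adjoin rfl
  refine ⟨hcent, ?_⟩
  -- the evaluation map `adjoin → R^n`
  let e : Algebra.adjoin R ({x} : Set _) →ₗ[R] (Fin n → R) :=
    (mulVecAt v).comp (Algebra.adjoin R ({x} : Set _)).val.toLinearMap
  have hinj : Function.Injective e := by
    rw [injective_iff_map_eq_zero]
    intro b hb
    have hb' : (b : Matrix (Fin n) (Fin n) R).mulVec v = 0 := hb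
    have hcomm : x * (b : Matrix (Fin n) (Fin n) R) = (b : Matrix (Fin n) (Fin n) R) * x :=
      hadj_comm _ b.2
    exact Subtype.ext (kill_lemma hv hcomm hb')
  have hsurj : Function.Surjective e := by
    rw [← LinearMap.range_eq_top]
    rw [← top_le_iff, ← hv, Submodule.span_le]
    rintro _ ⟨i, rfl⟩
    exact ⟨⟨x ^ (i : ℕ), hxi (i : ℕ)⟩, rfl⟩
  exact ⟨(Pi.basisFun R (Fin n)).map (LinearEquiv.ofBijective e ⟨hinj, hsurj⟩).symm⟩

end Aux

section FieldCase

variable {K : Type*} [Field K] {n : ℕ}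

/-- There exists a vector whose annihilator ideal is generated by the minimal polynomial. -/
lemma exists_torsion_generator (hn : 0 < n) (x : Matrix (Fin n) (Fin n) K) :
    ∃ v : Fin n → K, ∀ q : K[X], (aeval x q).mulVec v = 0 → minpoly K x ∣ q := by
  classical
  haveI : Nonempty (Fin n) := ⟨⟨0, hn⟩⟩
  haveI : Algebra.IsIntegral K (Matrix (Fin n) (Fin n) K) := Algebra.IsIntegral.of_finite _ _
  have hint : IsIntegral K x := Algebra.IsIntegral.isIntegral x
  set μ := minpoly K x with hμ
  have hμ0 : μ ≠ 0 := minpoly.ne_zero hint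
  set s := UniqueFactorizationMonoid.normalizedFactors μ with hs
  have hsassoc : Associated s.prod μ := UniqueFactorizationMonoid.prod_normalizedFactors hμ0
  set S := s.toFinset with hS
  set e : K[X] → ℕ := fun p => s.count p with he
  have hprod : s.prod = ∏ p ∈ S, p ^ e p := Finset.prod_multiset_count s
  have h0 : aeval x s.prod = 0 := by
    obtain ⟨u, hu⟩ := hsassoc
    have : s.prod = μ * ((u⁻¹ : K[X]ˣ) : K[X]) := by
      calc s.prod = s.prod * ((u : K[X]) * ((u⁻¹ : K[X]ˣ) : K[X])) := by simp
      _ = μ * ((u⁻¹ : K[X]ˣ) : K[X]) := by rw [← mul_assoc, hu]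
    rw [this, map_mul, minpoly.aeval, zero_mul]
  set m : K[X] → K[X] := fun p => ∏ p' ∈ S.erase p, p' ^ e p' with hm
  have hsplit : ∀ p ∈ S, p ^ e p * m p = ∏ p' ∈ S, p' ^ e p' :=
    fun p hp => Finset.mul_prod_erase S (fun t => t ^ e t) hp
  have hirrS : ∀ p ∈ S, Irreducible p := fun p hp =>
    UniqueFactorizationMonoid.irreducible_of_normalized_factor p (Multiset.mem_toFinset.mp hp)
  have hprimeS : ∀ p ∈ S, Prime p := fun p hp =>
    UniqueFactorizationMonoid.prime_of_normalized_factor p (Multiset.mem_toFinset.mp hp)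
  have heS : ∀ p ∈ S, 0 < e p := fun p hp =>
    Multiset.count_pos.mpr (Multiset.mem_toFinset.mp hp)
  have hnd : ∀ p ∈ S, ¬ p ∣ m p := by
    intro p hp h
    obtain ⟨p', hp', hdvd⟩ := (hprimeS p hp).exists_mem_finset_dvd h
    have hp'S : p' ∈ S := Finset.mem_of_mem_erase hp'
    have hdvd' : p ∣ p' := (hprimeS p hp).dvd_of_dvd_pow hdvd
    have hassoc : Associated p p' := (hirrS p hp).associated_of_dvd (hirrS p' hp'S) hdvd'
    have heq : p = p' := hassoc.eq_of_normalized
      (UniqueFactorizationMonoid.normalize_normalized_factor p (Multiset.mem_toFinset.mp hp))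
      (UniqueFactorizationMonoid.normalize_normalized_factor p' (Multiset.mem_toFinset.mp hp'S))
    exact (Finset.mem_erase.mp hp').1 (heq ▸ rfl)
  have hmne : ∀ p ∈ S, m p ≠ 0 := by
    intro p hp
    apply Finset.prod_ne_zero_iff.mpr
    intro p' hp'
    exact pow_ne_zero _ (hirrS p' (Finset.mem_of_mem_erase hp')).ne_zero
  have haeval_ne : ∀ p ∈ S, aeval x (p ^ (e p - 1) * m p) ≠ 0 := by
    intro p hp h
    have hdvd : μ ∣ p ^ (e p - 1) * m p := minpoly.dvd K x h
    have hne : p ^ (e p - 1) * m p ≠ 0 :=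
      mul_ne_zero (pow_ne_zero _ (hirrS p hp).ne_zero) (hmne p hp)
    have hle := Polynomial.natDegree_le_of_dvd hdvd hne
    have hdegμ : μ.natDegree = (p ^ e p * m p).natDegree := by
      rw [hsplit p hp, ← hprod]
      exact (Polynomial.natDegree_eq_of_degree_eq (degree_eq_degree_of_associated hsassoc)).symm
    have hdp : 0 < p.natDegree := (hirrS p hp).natDegree_pos
    have h1 : (p ^ (e p - 1) * m p).natDegree = (e p - 1) * p.natDegree + (m p).natDegree := by
      rw [Polynomial.natDegree_mul (pow_ne_zero _ (hirrS p hp).ne_zero) (hmne p hp),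
        Polynomial.natDegree_pow]
    have h2 : (p ^ e p * m p).natDegree = e p * p.natDegree + (m p).natDegree := by
      rw [Polynomial.natDegree_mul (pow_ne_zero _ (hirrS p hp).ne_zero) (hmne p hp),
        Polynomial.natDegree_pow]
    have hep := heS p hp
    rw [hdegμ, h1, h2] at hle
    have hlt : (e p - 1) * p.natDegree < e p * p.natDegree :=
      (Nat.mul_lt_mul_right hdp).mpr (Nat.sub_lt hep Nat.one_pos)
    omega
  have key : ∀ p ∈ S, ∃ w : Fin n → K,
      (aeval x (p ^ e p)).mulVec w = 0 ∧ (aeval x (p ^ (e p - 1))).mulVec w ≠ 0 := by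
    intro p hp
    have hne := haeval_ne p hp
    have : ∃ u : Fin n → K, (aeval x (p ^ (e p - 1) * m p)).mulVec u ≠ 0 := by
      by_contra hcon
      push_neg at hcon
      apply hne
      ext i j
      have := congrFun (hcon (Pi.single j 1)) i
      simpa [Matrix.mulVec_single] using this
    obtain ⟨u, hu⟩ := this
    refine ⟨(aeval x (m p)).mulVec u, ?_, ?_⟩
    · rw [Matrix.mulVec_mulVec, ← map_mul, hsplit p hp, ← hprod, h0, Matrix.zero_mulVec]
    · rw [Matrix.mulVec_mulVec, ← map_mul]
      exact hu
  choose w hw1 hw2 using key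
  set v : Fin n → K := ∑ p ∈ S.attach, w p p.2 with hv
  refine ⟨v, ?_⟩
  intro q hq
  have hdvdall : ∀ p ∈ S, p ^ e p ∣ q := by
    intro p hp
    set r := q * m p with hr
    have hrv : (aeval x r).mulVec v = 0 := by
      rw [show r = m p * q from mul_comm _ _, map_mul, ← Matrix.mulVec_mulVec, hq,
        Matrix.mulVec_zero]
    have hrw' : ∀ (p' : K[X]) (hp' : p' ∈ S), p' ≠ p → (aeval x r).mulVec (w p' hp') = 0 := by
      intro p' hp' hne
      have hdvd : p' ^ e p' ∣ m p :=
        Finset.dvd_prod_of_mem (fun t => t ^ e t) (Finset.mem_erase.mpr ⟨hne, hp'⟩)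
      obtain ⟨c, hc⟩ := hdvd
      rw [show r = (q * c) * (p' ^ e p') by rw [hr, hc]; ring, map_mul,
        ← Matrix.mulVec_mulVec, hw1 p' hp', Matrix.mulVec_zero]
    have hrwp : (aeval x r).mulVec (w p hp) = 0 := by
      have hsum : (aeval x r).mulVecLin v = ∑ t ∈ S.attach, (aeval x r).mulVecLin (w t t.2) := by
        rw [hv, map_sum]
      rw [Matrix.mulVecLin_apply] at hsum
      simp only [Matrix.mulVecLin_apply] at hsum
      rw [hrv] at hsum
      have := Finset.sum_eq_single_of_mem (⟨p, hp⟩ : {a // a ∈ S}) (Finset.mem_attach S _)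
        (f := fun t => (aeval x r).mulVec (w t.1 t.2))
        (fun t _ htne => hrw' t.1 t.2 (fun h => htne (Subtype.ext h)))
      rw [this] at hsum
      exact hsum.symm
    -- gcd argument
    set d := EuclideanDomain.gcd (p ^ e p) r with hd
    have hbezout := EuclideanDomain.gcd_eq_gcd_ab (p ^ e p) r
    have hdw : (aeval x d).mulVec (w p hp) = 0 := by
      rw [hd, hbezout, map_add, Matrix.add_mulVec,
        show p ^ e p * EuclideanDomain.gcdA (p ^ e p) r
          = EuclideanDomain.gcdA (p ^ e p) r * p ^ e p from mul_comm _ _,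
        show r * EuclideanDomain.gcdB (p ^ e p) r
          = EuclideanDomain.gcdB (p ^ e p) r * r from mul_comm _ _,
        map_mul, map_mul, ← Matrix.mulVec_mulVec, ← Matrix.mulVec_mulVec,
        hw1 p hp, hrwp, Matrix.mulVec_zero, Matrix.mulVec_zero, add_zero]
    have hd_dvd : d ∣ p ^ e p := EuclideanDomain.gcd_dvd_left _ _
    obtain ⟨i, hile, hassoc⟩ := (dvd_prime_pow (hprimeS p hp) (e p)).mp hd_dvd
    have hie : i = e p := by
      by_contra hne
      obtain ⟨u, hu⟩ := hassoc
      -- d * u = p ^ i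
      have hpi : (aeval x (p ^ i)).mulVec (w p hp) = 0 := by
        rw [← hu, show d * (u : K[X]) = (u : K[X]) * d from mul_comm _ _, map_mul,
          ← Matrix.mulVec_mulVec, hdw, Matrix.mulVec_zero]
      apply hw2 p hp
      rw [show e p - 1 = (e p - 1 - i) + i by omega, pow_add, map_mul,
        ← Matrix.mulVec_mulVec, hpi, Matrix.mulVec_zero]
    have hpe_dvd_r : p ^ e p ∣ r := by
      have h1 : p ^ e p ∣ d := (hie ▸ hassoc.symm).dvd
      exact h1.trans (EuclideanDomain.gcd_dvd_right _ _)
    have hcop : IsCoprime (p ^ e p) (m p) :=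
      ((hirrS p hp).coprime_pow_of_not_dvd (e p) (hnd p hp)).symm
    exact hcop.dvd_of_dvd_mul_right hpe_dvd_r
  have hpair : (↑S : Set K[X]).Pairwise (Function.onFun IsCoprime fun p => p ^ e p) := by
    intro p hp p' hp' hne
    have hnd' : ¬ p' ∣ p ^ e p := by
      intro h
      have hdvd' : p' ∣ p := (hprimeS p' hp').dvd_of_dvd_pow h
      have hassoc : Associated p' p := (hirrS p' hp').associated_of_dvd (hirrS p hp) hdvd'
      apply hne
      exact (hassoc.eq_of_normalized
        (UniqueFactorizationMonoid.normalize_normalized_factor p' (Multiset.mem_toFinset.mp hp'))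
        (UniqueFactorizationMonoid.normalize_normalized_factor p (Multiset.mem_toFinset.mp hp))).symm
    exact (hirrS p' hp').coprime_pow_of_not_dvd (e p') hnd'
  have hproddvd : (∏ p ∈ S, p ^ e p) ∣ q := Finset.prod_dvd_of_coprime hpair hdvdall
  calc μ ∣ s.prod := hsassoc.symm.dvd
  _ = ∏ p ∈ S, p ^ e p := hprod
  _ ∣ q := hproddvd

/-- Over a field, a matrix whose characteristic polynomial equals its minimal polynomial
has a cyclic vector. -/
lemma cyclic_of_charpoly_eq_minpoly (hn : 0 < n) (x : Matrix (Fin n) (Fin n) K)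
    (hreg : x.charpoly = minpoly K x) :
    ∃ v : Fin n → K, Submodule.span K
      (Set.range fun i : Fin n => (x ^ (i : ℕ)).mulVec v) = ⊤ := by
  classical
  have hdeg : (minpoly K x).natDegree = n := by
    rw [← hreg, Matrix.charpoly_natDegree_eq_dim, Fintype.card_fin]
  obtain ⟨v, htors⟩ := exists_torsion_generator hn x
  have hli : LinearIndependent K (fun i : Fin n => (x ^ (i : ℕ)).mulVec v) := by
    rw [Fintype.linearIndependent_iff]
    intro c hc i
    set q : K[X] := ∑ j : Fin n, C (c j) * X ^ (j : ℕ) with hqdef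
    have hq : (aeval x q).mulVec v = 0 := by
      have haq : aeval x q = ∑ j : Fin n, c j • x ^ (j : ℕ) := by
        rw [hqdef, map_sum]
        congr 1
        ext j
        rw [map_mul, aeval_C, map_pow, aeval_X, ← Algebra.smul_def]
      rw [haq, ← mulVecAt_apply, map_sum]
      have h1 : ∀ j : Fin n, mulVecAt v (c j • x ^ (j : ℕ)) = c j • ((x ^ (j : ℕ)).mulVec v) := by
        intro j; simp [Matrix.smul_mulVec]
      simp only [h1]
      exact hc
    have hdvd := htors q hq
    have hq0 : q = 0 := by
      by_contra h
      have hle := Polynomial.natDegree_le_of_dvd hdvd h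
      have hqlt : q.natDegree < n := by
        have : q.natDegree ≤ n - 1 := by
          apply Polynomial.natDegree_sum_le_of_forall_le
          intro j _
          exact le_trans (Polynomial.natDegree_C_mul_X_pow_le _ _) (by omega)
        omega
      omega
    have hcq : c i = q.coeff (i : ℕ) := by
      rw [hqdef, Polynomial.finset_sum_coeff]
      simp only [Polynomial.coeff_C_mul, Polynomial.coeff_X_pow]
      rw [Finset.sum_eq_single i]
      · simp
      · intro j _ hji
        simp [Fin.val_eq_val, Ne.symm hji]
      · simp
    rw [hcq, hq0, Polynomial.coeff_zero]
  have hcard : Fintype.card (Fin n) = Module.finrank K (Fin n → K) := by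
    simp [Module.finrank_fin_fun]
  exact ⟨v, hli.span_eq_top_of_card_eq_finrank' hcard⟩

end FieldCase

/-- Let `𝔬` be a complete discrete valuation ring with maximal ideal
`𝔭` and finite residue field, let `𝔬_ℓ = 𝔬/𝔭^ℓ` and `x ∈ M_n(𝔬_ℓ)`. If the reduction
of `x` modulo `𝔭` is regular (characteristic polynomial = minimal polynomial), then
`x` is regular over `𝔬_ℓ` (has a cyclic vector) and the centralizer of `x` in
`M_n(𝔬_ℓ)` is `𝔬_ℓ[x]`, a free `𝔬_ℓ`-module of rank `n`. -/
theorem stmt13 (O : Type*) [CommRing O] [IsDomain O] [IsDiscreteValuationRing O]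
    [IsAdicComplete (IsLocalRing.maximalIdeal O) O]
    [Finite (IsLocalRing.ResidueField O)]
    (ℓ : ℕ) (hℓ : 0 < ℓ) (n : ℕ)
    (x : Matrix (Fin n) (Fin n) (O ⧸ (IsLocalRing.maximalIdeal O ^ ℓ)))
    (x₁ : Matrix (Fin n) (Fin n) (O ⧸ (IsLocalRing.maximalIdeal O)))
    (hx₁ : x₁ = x.map
      (Ideal.Quotient.factor (Ideal.pow_le_self hℓ.ne')))
    (hreg : x₁.charpoly = minpoly (O ⧸ (IsLocalRing.maximalIdeal O)) x₁) :
    (∃ v : Fin n → (O ⧸ (IsLocalRing.maximalIdeal O ^ ℓ)),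
        Submodule.span (O ⧸ (IsLocalRing.maximalIdeal O ^ ℓ))
          (Set.range fun i : Fin n => (x ^ (i : ℕ)).mulVec v) = ⊤) ∧
      (∀ b : Matrix (Fin n) (Fin n) (O ⧸ (IsLocalRing.maximalIdeal O ^ ℓ)),
        x * b = b * x ↔
          b ∈ Algebra.adjoin (O ⧸ (IsLocalRing.maximalIdeal O ^ ℓ)) ({x} : Set _)) ∧
      Nonempty (Module.Basis (Fin n) (O ⧸ (IsLocalRing.maximalIdeal O ^ ℓ))
        (Algebra.adjoin (O ⧸ (IsLocalRing.maximalIdeal O ^ ℓ)) ({x} : Set _))) := by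
  classical
  have part1 : ∃ v : Fin n → (O ⧸ (IsLocalRing.maximalIdeal O ^ ℓ)),
      Submodule.span (O ⧸ (IsLocalRing.maximalIdeal O ^ ℓ))
        (Set.range fun i : Fin n => (x ^ (i : ℕ)).mulVec v) = ⊤ := by
    rcases Nat.eq_zero_or_pos n with hn | hn
    · subst hn
      refine ⟨0, ?_⟩
      rw [eq_top_iff]
      intro w _
      have hw : w = 0 := funext fun i => i.elim0
      rw [hw]
      exact Submodule.zero_mem _
    · letI : Field (O ⧸ (IsLocalRing.maximalIdeal O)) :=
        Ideal.Quotient.field (IsLocalRing.maximalIdeal O)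
      obtain ⟨v₁, hv₁⟩ := cyclic_of_charpoly_eq_minpoly hn x₁ hreg
      set π : (O ⧸ (IsLocalRing.maximalIdeal O ^ ℓ)) →+* (O ⧸ (IsLocalRing.maximalIdeal O)) :=
        Ideal.Quotient.factor (Ideal.pow_le_self hℓ.ne') with hπdef
      have hπsurj : Function.Surjective π := by
        intro a
        obtain ⟨b, rfl⟩ := Ideal.Quotient.mk_surjective a
        refine ⟨Ideal.Quotient.mk _ b, ?_⟩
        rw [hπdef]
        exact Ideal.Quotient.factor_mk _ b
      choose v hvlift using fun i => hπsurj (v₁ i)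
      set N : Submodule (O ⧸ (IsLocalRing.maximalIdeal O ^ ℓ))
          (Fin n → (O ⧸ (IsLocalRing.maximalIdeal O ^ ℓ))) :=
        Submodule.span _ (Set.range fun i : Fin n => (x ^ (i : ℕ)).mulVec v) with hN
      have hmap : ∀ (M : Matrix (Fin n) (Fin n) (O ⧸ (IsLocalRing.maximalIdeal O ^ ℓ)))
          (u : Fin n → (O ⧸ (IsLocalRing.maximalIdeal O ^ ℓ))) (j : Fin n),
          π ((M.mulVec u) j) = ((M.map π).mulVec (fun i => π (u i))) j := by
        intro M u j
        simp [Matrix.mulVec, dotProduct, map_sum, Matrix.map_apply]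
      have hxpow : ∀ i : ℕ, (x ^ i).map π = x₁ ^ i := by
        intro i
        rw [hx₁, ← RingHom.mapMatrix_apply, ← RingHom.mapMatrix_apply, map_pow]
      have hgen : ∀ (i : Fin n) (j : Fin n),
          π (((x ^ (i : ℕ)).mulVec v) j) = ((x₁ ^ (i : ℕ)).mulVec v₁) j := by
        intro i j
        rw [hmap, hxpow]
        congr 1
        funext i'
        exact hvlift i'
      set J : Ideal (O ⧸ (IsLocalRing.maximalIdeal O ^ ℓ)) := RingHom.ker π with hJ
      have step1 : ∀ w : Fin n → (O ⧸ (IsLocalRing.maximalIdeal O ^ ℓ)),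
          ∃ u ∈ N, ∀ j, w j - u j ∈ J := by
        intro w
        have hmem : (fun j => π (w j)) ∈ Submodule.span (O ⧸ (IsLocalRing.maximalIdeal O))
            (Set.range fun i : Fin n => (x₁ ^ (i : ℕ)).mulVec v₁) := by
          rw [hv₁]; trivial
        obtain ⟨c, hc⟩ := (Submodule.mem_span_range_iff_exists_fun _).mp hmem
        choose c' hc' using fun i => hπsurj (c i)
        refine ⟨∑ i : Fin n, c' i • (x ^ (i : ℕ)).mulVec v, ?_, ?_⟩
        · exact Submodule.sum_mem _ fun i _ =>
            Submodule.smul_mem _ _ (Submodule.subset_span ⟨i, rfl⟩)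
        · intro j
          rw [RingHom.mem_ker, map_sub]
          have hval : π ((∑ i : Fin n, c' i • (x ^ (i : ℕ)).mulVec v) j)
              = ∑ i : Fin n, c i * ((x₁ ^ (i : ℕ)).mulVec v₁) j := by
            simp only [Finset.sum_apply, Pi.smul_apply, smul_eq_mul, map_sum, map_mul]
            congr 1
            funext i
            rw [hc' i, hgen i j]
          rw [hval]
          have hcj := congrFun hc j
          simp only [Finset.sum_apply, Pi.smul_apply, smul_eq_mul] at hcj
          rw [hcj, sub_self]
      have hJpow : J ^ ℓ = ⊥ := by
        have hJeq : J = Ideal.map (Ideal.Quotient.mk (IsLocalRing.maximalIdeal O ^ ℓ))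
            (IsLocalRing.maximalIdeal O) := by
          apply le_antisymm
          · intro b hb
            obtain ⟨a, rfl⟩ := Ideal.Quotient.mk_surjective b
            rw [RingHom.mem_ker, hπdef, Ideal.Quotient.factor_mk] at hb
            exact Ideal.mem_map_of_mem _ (Ideal.Quotient.eq_zero_iff_mem.mp hb)
          · rw [Ideal.map_le_iff_le_comap]
            intro a ha
            simp only [Ideal.mem_comap, RingHom.mem_ker, hπdef, Ideal.Quotient.factor_mk]
            exact Ideal.Quotient.eq_zero_iff_mem.mpr ha
        rw [hJeq, ← Ideal.map_pow, Ideal.map_quotient_self]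
      have h1 : (⊤ : Submodule (O ⧸ (IsLocalRing.maximalIdeal O ^ ℓ))
          (Fin n → (O ⧸ (IsLocalRing.maximalIdeal O ^ ℓ)))) ≤ N ⊔ J • ⊤ := by
        intro w _
        obtain ⟨u, huN, hdiff⟩ := step1 w
        have hwu : w - u ∈ J • (⊤ : Submodule (O ⧸ (IsLocalRing.maximalIdeal O ^ ℓ))
            (Fin n → (O ⧸ (IsLocalRing.maximalIdeal O ^ ℓ)))) := by
          have heq := pi_eq_sum_univ (w - u)
          rw [heq]
          exact Submodule.sum_mem _ fun i _ =>
            Submodule.smul_mem_smul (by simpa using hdiff i) trivial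
        have hw : w = u + (w - u) := by abel
        rw [hw]
        exact Submodule.add_mem _ (Submodule.mem_sup_left huN) (Submodule.mem_sup_right hwu)
      have h2 : ∀ m : ℕ, (⊤ : Submodule (O ⧸ (IsLocalRing.maximalIdeal O ^ ℓ))
          (Fin n → (O ⧸ (IsLocalRing.maximalIdeal O ^ ℓ)))) ≤ N ⊔ (J ^ (m + 1)) • ⊤ := by
        intro m
        induction m with
        | zero => simpa [pow_one] using h1
        | succ m ih =>
          have hstep : J • (⊤ : Submodule (O ⧸ (IsLocalRing.maximalIdeal O ^ ℓ))
              (Fin n → (O ⧸ (IsLocalRing.maximalIdeal O ^ ℓ)))) ≤ N ⊔ (J ^ (m + 2)) • ⊤ := by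
            calc J • (⊤ : Submodule (O ⧸ (IsLocalRing.maximalIdeal O ^ ℓ))
                (Fin n → (O ⧸ (IsLocalRing.maximalIdeal O ^ ℓ)))) ≤ J • (N ⊔ (J ^ (m + 1)) • ⊤) :=
                Submodule.smul_mono le_rfl ih
            _ = J • N ⊔ J • ((J ^ (m + 1)) • ⊤) := Submodule.smul_sup _ _ _
            _ ≤ N ⊔ (J ^ (m + 2)) • ⊤ := by
                apply sup_le_sup (Submodule.smul_le_right)
                refine le_of_eq ?_
                rw [← Submodule.smul_assoc, smul_eq_mul, ← pow_succ']
          calc (⊤ : Submodule (O ⧸ (IsLocalRing.maximalIdeal O ^ ℓ))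
              (Fin n → (O ⧸ (IsLocalRing.maximalIdeal O ^ ℓ)))) ≤ N ⊔ J • ⊤ := h1
          _ ≤ N ⊔ (N ⊔ (J ^ (m + 2)) • ⊤) := sup_le_sup le_rfl hstep
          _ = N ⊔ (J ^ (m + 2)) • ⊤ := by rw [← sup_assoc, sup_idem]
      have hfin : (⊤ : Submodule (O ⧸ (IsLocalRing.maximalIdeal O ^ ℓ))
          (Fin n → (O ⧸ (IsLocalRing.maximalIdeal O ^ ℓ)))) ≤ N := by
        obtain ⟨m, hm⟩ : ∃ m, ℓ = m + 1 := ⟨ℓ - 1, by omega⟩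
        have hfin' := h2 m
        rw [← hm, hJpow] at hfin'
        simpa using hfin'
      exact ⟨v, top_le_iff.mp hfin⟩
  obtain ⟨v, hv⟩ := part1
  obtain ⟨h2, h3⟩ := parts23 x v hv
  exact ⟨⟨v, hv⟩, h2, h3⟩
end
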